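/- arXiv:1203.5263 — 7 statements merged into one kernel-verified Lean document; each statement's English description precedes it below -/
import Mathlib

section
/- With f as defined on [0,1] (tent functions toward e_n/n!), for every n, ∫_{1/2^{n+1}}^{1} f = ∑_{k=0}^{n} (1/k!)·e_k in C([0,1],ℝ). -/
def eFun (n : ℕ) : C(Set.Icc (0:ℝ) 1, ℝ) :=
  ⟨fun t => (t : ℝ) ^ n, (continuous_subtype_val.pow n)⟩

open MeasureTheory intervalIntegral

lemma hab (n : ℕ) : (1:ℝ)/2^(n+1) ≤ 3/2^(n+2) := by
  rw [div_le_div_iff₀ (by positivity) (by positivity), pow_succ]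
  nlinarith [pow_pos (by norm_num : (0:ℝ)<2) (n+1)]

lemma hbc (n : ℕ) : (3:ℝ)/2^(n+2) ≤ 1/2^n := by
  rw [div_le_div_iff₀ (by positivity) (by positivity), pow_add]
  nlinarith [pow_pos (by norm_num : (0:ℝ)<2) n]

lemma int1 (f : ℝ → C(Set.Icc (0:ℝ) 1, ℝ))
    (h1 : ∀ n : ℕ, ∀ x ∈ Set.Icc ((1:ℝ) / 2 ^ (n + 1)) (3 / 2 ^ (n + 2)),
      f x = ((2 ^ (2 * n + 4) / (n.factorial : ℝ)) * (x - 1 / 2 ^ (n + 1))) • eFun n)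
    (n : ℕ) : IntervalIntegrable f volume ((1:ℝ)/2^(n+1)) (3/2^(n+2)) := by
  rw [intervalIntegrable_iff_integrableOn_Icc_of_le (hab n)]
  have hc : Continuous fun x : ℝ =>
      ((2 ^ (2 * n + 4) / (n.factorial : ℝ)) * (x - 1 / 2 ^ (n + 1))) • eFun n :=
    (continuous_const.mul (continuous_id.sub continuous_const)).smul continuous_const
  exact (hc.integrableOn_Icc).congr_fun (fun x hx => (h1 n x hx).symm) measurableSet_Icc

lemma int2 (f : ℝ → C(Set.Icc (0:ℝ) 1, ℝ))
    (h2 : ∀ n : ℕ, ∀ x ∈ Set.Icc ((3:ℝ) / 2 ^ (n + 2)) (1 / 2 ^ n),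
      f x = ((2 ^ (2 * n + 4) / (n.factorial : ℝ)) * (1 / 2 ^ n - x)) • eFun n)
    (n : ℕ) : IntervalIntegrable f volume ((3:ℝ)/2^(n+2)) (1/2^n) := by
  rw [intervalIntegrable_iff_integrableOn_Icc_of_le (hbc n)]
  have hc : Continuous fun x : ℝ =>
      ((2 ^ (2 * n + 4) / (n.factorial : ℝ)) * (1 / 2 ^ n - x)) • eFun n :=
    (continuous_const.mul (continuous_const.sub continuous_id)).smul continuous_const
  exact (hc.integrableOn_Icc).congr_fun (fun x hx => (h2 n x hx).symm) measurableSet_Icc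

lemma tent_piece (f : ℝ → C(Set.Icc (0:ℝ) 1, ℝ))
    (h1 : ∀ n : ℕ, ∀ x ∈ Set.Icc ((1:ℝ) / 2 ^ (n + 1)) (3 / 2 ^ (n + 2)),
      f x = ((2 ^ (2 * n + 4) / (n.factorial : ℝ)) * (x - 1 / 2 ^ (n + 1))) • eFun n)
    (h2 : ∀ n : ℕ, ∀ x ∈ Set.Icc ((3:ℝ) / 2 ^ (n + 2)) (1 / 2 ^ n),
      f x = ((2 ^ (2 * n + 4) / (n.factorial : ℝ)) * (1 / 2 ^ n - x)) • eFun n)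
    (n : ℕ) :
    (∫ x in ((1:ℝ)/2^(n+1))..(1/2^n), f x) = (1/(n.factorial:ℝ)) • eFun n := by
  have hf : (n.factorial : ℝ) ≠ 0 := Nat.cast_ne_zero.2 n.factorial_ne_zero
  have hp : (2:ℝ)^n ≠ 0 := by positivity
  rw [← integral_add_adjacent_intervals (int1 f h1 n) (int2 f h2 n)]
  have e1 : (∫ x in ((1:ℝ)/2^(n+1))..(3/2^(n+2)), f x)
      = (∫ x in ((1:ℝ)/2^(n+1))..(3/2^(n+2)),
          ((2 ^ (2 * n + 4) / (n.factorial : ℝ)) * (x - 1 / 2 ^ (n + 1)))) • eFun n := by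
    rw [show (∫ x in ((1:ℝ)/2^(n+1))..(3/2^(n+2)), f x)
        = ∫ x in ((1:ℝ)/2^(n+1))..(3/2^(n+2)),
            ((2 ^ (2 * n + 4) / (n.factorial : ℝ)) * (x - 1 / 2 ^ (n + 1))) • eFun n from
      integral_congr (fun x hx => h1 n x (by rwa [Set.uIcc_of_le (hab n)] at hx))]
    exact integral_smul_const _ _
  have e2 : (∫ x in ((3:ℝ)/2^(n+2))..(1/2^n), f x)
      = (∫ x in ((3:ℝ)/2^(n+2))..(1/2^n),
          ((2 ^ (2 * n + 4) / (n.factorial : ℝ)) * (1 / 2 ^ n - x))) • eFun n := by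
    rw [show (∫ x in ((3:ℝ)/2^(n+2))..(1/2^n), f x)
        = ∫ x in ((3:ℝ)/2^(n+2))..(1/2^n),
            ((2 ^ (2 * n + 4) / (n.factorial : ℝ)) * (1 / 2 ^ n - x)) • eFun n from
      integral_congr (fun x hx => h2 n x (by rwa [Set.uIcc_of_le (hbc n)] at hx))]
    exact integral_smul_const _ _
  rw [e1, e2, ← add_smul]
  congr 1
  rw [intervalIntegral.integral_const_mul, intervalIntegral.integral_const_mul,
      integral_sub intervalIntegrable_id intervalIntegrable_const,
      integral_sub intervalIntegrable_const intervalIntegrable_id,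
      integral_id, integral_id, intervalIntegral.integral_const, intervalIntegral.integral_const, smul_eq_mul, smul_eq_mul]
  have hP : (2:ℝ)^(2*n+4) = ((2:ℝ)^n)^2 * 16 := by rw [pow_add, pow_mul']; norm_num
  have h1' : (2:ℝ)^(n+1) = 2^n * 2 := by rw [pow_succ]
  have h2' : (2:ℝ)^(n+2) = 2^n * 4 := by rw [pow_add]; norm_num
  rw [hP, h1', h2']
  field_simp
  ring

lemma intOn (f : ℝ → C(Set.Icc (0:ℝ) 1, ℝ))
    (h1 : ∀ n : ℕ, ∀ x ∈ Set.Icc ((1:ℝ) / 2 ^ (n + 1)) (3 / 2 ^ (n + 2)),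
      f x = ((2 ^ (2 * n + 4) / (n.factorial : ℝ)) * (x - 1 / 2 ^ (n + 1))) • eFun n)
    (h2 : ∀ n : ℕ, ∀ x ∈ Set.Icc ((3:ℝ) / 2 ^ (n + 2)) (1 / 2 ^ n),
      f x = ((2 ^ (2 * n + 4) / (n.factorial : ℝ)) * (1 / 2 ^ n - x)) • eFun n) :
    ∀ n : ℕ, IntervalIntegrable f volume ((1:ℝ)/2^(n+1)) 1
  | 0 => by
    have h := (int1 f h1 0).trans (int2 f h2 0)
    norm_num at h ⊢
    exact h
  | (n+1) => ((int1 f h1 (n+1)).trans (int2 f h2 (n+1))).trans (intOn f h1 h2 n)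

/-- For the tent construction `f`, for every `n`,
`∫_{1/2^(n+1)}^{1} f = ∑_{k=0}^{n} (1/k!) • e_k` in `C([0,1], ℝ)`. -/
theorem tent_integral_partial_sums (f : ℝ → C(Set.Icc (0:ℝ) 1, ℝ))
    (h0 : f 0 = 0)
    (h1 : ∀ n : ℕ, ∀ x ∈ Set.Icc ((1:ℝ) / 2 ^ (n + 1)) (3 / 2 ^ (n + 2)),
      f x = ((2 ^ (2 * n + 4) / (n.factorial : ℝ)) * (x - 1 / 2 ^ (n + 1))) • eFun n)
    (h2 : ∀ n : ℕ, ∀ x ∈ Set.Icc ((3:ℝ) / 2 ^ (n + 2)) (1 / 2 ^ n),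
      f x = ((2 ^ (2 * n + 4) / (n.factorial : ℝ)) * (1 / 2 ^ n - x)) • eFun n)
    (n : ℕ) :
    (∫ x in ((1:ℝ) / 2 ^ (n + 1))..1, f x)
      = ∑ k ∈ Finset.range (n + 1), (1 / (k.factorial : ℝ)) • eFun k := by
  induction n with
  | zero =>
    have h := tent_piece f h1 h2 0
    norm_num at h ⊢
    exact h
  | succ n ih =>
    have split := integral_add_adjacent_intervals
      ((int1 f h1 (n+1)).trans (int2 f h2 (n+1))) (intOn f h1 h2 n)
    have tp := tent_piece f h1 h2 (n+1)
    rw [show ((1:ℝ)/2^(n+1+1)) = 1/2^(n+2) by norm_num] at *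
    rw [← split, tp, ih]
    conv_rhs => rw [Finset.sum_range_succ]
    exact add_comm _ _
end

section
/- The function f : [0,1] → C([0,1],ℝ) constructed from the exponential series (tent functions on dyadic intervals) is Bochner integrable on [0,1] with ∫_{[0,1]} f = exp|_{[0,1]}, and consequently its integral over [0,1] does not lie in the subspace E of polynomial functions. -/
/-- The restriction of `exp` to `[0,1]` as an element of `C([0,1], ℝ)`. -/
noncomputable def expFun : C(Set.Icc (0:ℝ) 1, ℝ) :=
  ⟨fun t => Real.exp t, Real.continuous_exp.comp continuous_subtype_val⟩

open MeasureTheory Set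

lemma eFun_norm_le (n : ℕ) : ‖eFun n‖ ≤ 1 := by
  refine (ContinuousMap.norm_le _ zero_le_one).mpr fun t => ?_
  have h1 := t.2.1
  have h2 := t.2.2
  simp only [eFun, ContinuousMap.coe_mk, Real.norm_eq_abs]
  rw [abs_of_nonneg (pow_nonneg h1 n)]
  exact pow_le_one₀ h1 h2

lemma expHasSum : HasSum (fun n : ℕ => ((n.factorial : ℝ))⁻¹ • eFun n) expFun := by
  have hsum : Summable (fun n : ℕ => ((n.factorial : ℝ))⁻¹ • eFun n) := by
    refine Summable.of_norm_bounded (Real.summable_pow_div_factorial 1) fun n => ?_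
    rw [one_pow, norm_smul ((n.factorial : ℝ))⁻¹ (eFun n)]
    calc ‖((n.factorial : ℝ))⁻¹‖ * ‖eFun n‖ ≤ ((n.factorial : ℝ))⁻¹ * 1 := by
          rw [Real.norm_eq_abs, abs_of_nonneg (by positivity)]
          exact mul_le_mul_of_nonneg_left (eFun_norm_le n) (by positivity)
      _ = 1 / (n.factorial : ℝ) := by ring
  have hS := hsum.hasSum
  convert hS using 1
  ext t
  have h1 : HasSum (fun n : ℕ => ((n.factorial : ℝ))⁻¹ • (eFun n) t)
      ((∑' n : ℕ, ((n.factorial : ℝ))⁻¹ • eFun n) t) := by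
    have := (ContinuousMap.evalCLM ℝ t).hasSum hS
    simpa using this
  have h2 : HasSum (fun n : ℕ => ((t:ℝ)) ^ n / (n.factorial : ℝ)) (Real.exp t) := by
    rw [Real.exp_eq_exp_ℝ]
    exact NormedSpace.expSeries_div_hasSum_exp (t : ℝ)
  have : (fun n : ℕ => ((n.factorial : ℝ))⁻¹ • (eFun n) t)
      = fun n : ℕ => ((t:ℝ)) ^ n / (n.factorial : ℝ) := by
    funext n
    simp [eFun, div_eq_inv_mul, smul_eq_mul]
  rw [this] at h1
  exact (h2.unique h1)

lemma keyInt1 (a b c : ℝ) : ∫ x in a..b, c * (x - a) = c * (b - a)^2 / 2 := by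
  have hd : ∀ x ∈ uIcc a b, HasDerivAt (fun y => c * (y - a)^2 / 2) (c * (x - a)) x := by
    intro x _
    have h := ((((hasDerivAt_id x).sub_const a).pow 2).const_mul c).div_const 2
    have hder : c * (↑(2:ℕ) * (id x - a) ^ (2 - 1) * 1) / 2 = c * (x - a) := by
      simp only [id_eq]; push_cast; ring
    rwa [hder] at h
  rw [intervalIntegral.integral_eq_sub_of_hasDerivAt hd
    ((continuous_const.mul (continuous_id.sub continuous_const)).intervalIntegrable a b)]
  ring

lemma keyInt2 (a b c : ℝ) : ∫ x in a..b, c * (b - x) = c * (b - a)^2 / 2 := by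
  have hd : ∀ x ∈ uIcc a b, HasDerivAt (fun y => -(c * (b - y)^2 / 2)) (c * (b - x)) x := by
    intro x _
    have h := (((((hasDerivAt_id x).neg.add_const b).pow 2).const_mul c).div_const 2).neg
    have hfun : (fun y => -(c * (-id y + b) ^ 2 / 2)) = (fun y => -(c * (b - y) ^ 2 / 2)) := by
      funext y; simp only [id_eq]; ring_nf
    have hder : -(c * (↑(2:ℕ) * (-id x + b) ^ (2 - 1) * -1) / 2) = c * (b - x) := by
      simp only [id_eq]; push_cast; ring
    exact (h.congr_deriv (by simp only [Pi.neg_apply, id_eq]; push_cast; ring)).congr_of_eventuallyEq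
      (Filter.Eventually.of_forall fun y => by simp only [Pi.neg_apply, Pi.pow_apply, id_eq]; ring)
  rw [intervalIntegral.integral_eq_sub_of_hasDerivAt hd
    ((continuous_const.mul (continuous_const.sub continuous_id)).intervalIntegrable a b)]
  ring

lemma piece (n : ℕ) (f : ℝ → C(Set.Icc (0:ℝ) 1, ℝ))
    (h1n : ∀ x ∈ Set.Icc ((1:ℝ) / 2 ^ (n + 1)) (3 / 2 ^ (n + 2)),
      f x = ((2 ^ (2 * n + 4) / (n.factorial : ℝ)) * (x - 1 / 2 ^ (n + 1))) • eFun n)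
    (h2n : ∀ x ∈ Set.Icc ((3:ℝ) / 2 ^ (n + 2)) (1 / 2 ^ n),
      f x = ((2 ^ (2 * n + 4) / (n.factorial : ℝ)) * (1 / 2 ^ n - x)) • eFun n) :
    IntegrableOn f (Ioc ((1:ℝ)/2^(n+1)) (1/2^n)) volume ∧
    (∫ x in Ioc ((1:ℝ)/2^(n+1)) (1/2^n), f x) = ((n.factorial:ℝ))⁻¹ • eFun n ∧
    (∫ x in Ioc ((1:ℝ)/2^(n+1)) (1/2^n), ‖f x‖) ≤ 2 / (n.factorial:ℝ) := by
  set a : ℝ := 1 / 2 ^ (n+1) with ha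
  set m : ℝ := 3 / 2 ^ (n+2) with hm
  set b : ℝ := 1 / 2 ^ n with hb
  set c : ℝ := 2 ^ (2*n+4) / (n.factorial : ℝ) with hc
  have hP : (0:ℝ) < 2 ^ (n+2) := by positivity
  have hPne : (2:ℝ) ^ (n+2) ≠ 0 := ne_of_gt hP
  have hfacpos : (0:ℝ) < (n.factorial : ℝ) := by exact_mod_cast n.factorial_pos
  have ha2 : a = 2 / 2 ^ (n+2) := by rw [ha, pow_succ]; ring
  have hb4 : b = 4 / 2 ^ (n+2) := by rw [hb, pow_succ, pow_succ]; ring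
  have ham : a < m := by rw [ha2, hm, div_lt_div_iff_of_pos_right hP]; norm_num
  have hmb : m < b := by rw [hb4, hm, div_lt_div_iff_of_pos_right hP]; norm_num
  have hma : m - a = 1 / 2 ^ (n+2) := by rw [ha2, hm]; ring
  have hbm : b - m = 1 / 2 ^ (n+2) := by rw [hb4, hm]; ring
  have hba : b - a = 2 / 2 ^ (n+2) := by rw [hb4, ha2]; ring
  have hpow : (2:ℝ) ^ (2*n+4) = (2 ^ (n+2)) ^ 2 := by
    rw [← pow_mul]; congr 1; ring
  have hcpos : (0:ℝ) < c := by rw [hc]; positivity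
  have cont1 : Continuous (fun x : ℝ => (c * (x - a)) • eFun n) :=
    (continuous_const.mul (continuous_id.sub continuous_const)).smul continuous_const
  have cont2 : Continuous (fun x : ℝ => (c * (b - x)) • eFun n) :=
    (continuous_const.mul (continuous_const.sub continuous_id)).smul continuous_const
  have hI1 : IntegrableOn f (Ioc a m) volume :=
    (cont1.integrableOn_Ioc).congr_fun
      (fun x hx => (h1n x (Ioc_subset_Icc_self hx)).symm) measurableSet_Ioc
  have hI2 : IntegrableOn f (Ioc m b) volume :=
    (cont2.integrableOn_Ioc).congr_fun
      (fun x hx => (h2n x (Ioc_subset_Icc_self hx)).symm) measurableSet_Ioc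
  have eq1 : (∫ x in Ioc a m, f x) = (c * (m - a)^2/2) • eFun n := by
    rw [setIntegral_congr_fun measurableSet_Ioc
      (fun x hx => h1n x (Ioc_subset_Icc_self hx)),
      integral_smul_const, ← intervalIntegral.integral_of_le ham.le, keyInt1]
  have eq2 : (∫ x in Ioc m b, f x) = (c * (b - m)^2/2) • eFun n := by
    rw [setIntegral_congr_fun measurableSet_Ioc
      (fun x hx => h2n x (Ioc_subset_Icc_self hx)),
      integral_smul_const, ← intervalIntegral.integral_of_le hmb.le, keyInt2]
  have hunion : Ioc a b = Ioc a m ∪ Ioc m b := (Ioc_union_Ioc_eq_Ioc ham.le hmb.le).symm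
  have hdisj : Disjoint (Ioc a m) (Ioc m b) := by
    rw [Set.Ioc_disjoint_Ioc, min_eq_left hmb.le, max_eq_right ham.le]
  have hInt : IntegrableOn f (Ioc a b) volume := by rw [hunion]; exact hI1.union hI2
  refine ⟨hInt, ?_, ?_⟩
  · rw [hunion, setIntegral_union hdisj measurableSet_Ioc hI1 hI2, eq1, eq2, ← add_smul]
    congr 1
    rw [hma, hbm, hc, hpow]
    field_simp
    ring
  · have hBval : ∀ x ∈ Ioc a b, ‖f x‖ ≤ 2 ^ (n+2) / (n.factorial : ℝ) := by
      intro x hx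
      have hcoef : c * (1 / 2 ^ (n+2)) = 2 ^ (n+2) / (n.factorial : ℝ) := by
        rw [hc, hpow]; field_simp
      rcases le_or_gt x m with hxm | hxm
      · rw [h1n x ⟨hx.1.le, hxm⟩, norm_smul (c * (x - a)) (eFun n)]
        calc ‖c * (x - a)‖ * ‖eFun n‖ ≤ (c * (m - a)) * 1 := by
              apply mul_le_mul _ (eFun_norm_le n) (norm_nonneg _)
                (by nlinarith [hma])
              rw [Real.norm_eq_abs, abs_of_nonneg (by nlinarith [hx.1])]
              apply mul_le_mul_of_nonneg_left (by linarith) hcpos.le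
          _ = 2 ^ (n+2) / (n.factorial : ℝ) := by rw [mul_one, hma, hcoef]
      · rw [h2n x ⟨hxm.le, hx.2⟩, norm_smul (c * (b - x)) (eFun n)]
        calc ‖c * (b - x)‖ * ‖eFun n‖ ≤ (c * (b - m)) * 1 := by
              apply mul_le_mul _ (eFun_norm_le n) (norm_nonneg _)
                (by nlinarith [hbm])
              rw [Real.norm_eq_abs, abs_of_nonneg (by nlinarith [hx.2])]
              apply mul_le_mul_of_nonneg_left (by linarith) hcpos.le
          _ = 2 ^ (n+2) / (n.factorial : ℝ) := by rw [mul_one, hbm, hcoef]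
    have hmono := setIntegral_mono_on hInt.norm
      ((integrableOn_const_iff).2 (Or.inr measure_Ioc_lt_top)) measurableSet_Ioc hBval
    rw [setIntegral_const, measureReal_def, Real.volume_Ioc,
      ENNReal.toReal_ofReal (by linarith : (0:ℝ) ≤ b - a), smul_eq_mul] at hmono
    calc (∫ x in Ioc a b, ‖f x‖) ≤ (b - a) * (2 ^ (n+2) / (n.factorial : ℝ)) := hmono
      _ = 2 / (n.factorial : ℝ) := by rw [hba]; field_simp

lemma cover : (⋃ n : ℕ, Ioc ((1:ℝ)/2^(n+1)) (1/2^n)) = Ioc (0:ℝ) 1 := by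
  ext x
  simp only [mem_iUnion, mem_Ioc]
  constructor
  · rintro ⟨n, hn1, hn2⟩
    refine ⟨lt_trans (by positivity) hn1, hn2.trans ?_⟩
    rw [div_le_one (by positivity)]
    exact one_le_pow₀ one_le_two
  · rintro ⟨hx0, hx1⟩
    have hP : ∃ k : ℕ, (1:ℝ)/2^(k+1) < x := by
      obtain ⟨k, hk⟩ := exists_pow_lt_of_lt_one hx0 (by norm_num : (1:ℝ)/2 < 1)
      refine ⟨k, lt_of_le_of_lt ?_ hk⟩
      rw [div_pow, one_pow, pow_succ]
      apply div_le_div_of_nonneg_left one_pos.le (by positivity)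
      nlinarith [pow_pos (by norm_num : (0:ℝ) < 2) k]
    classical
    refine ⟨Nat.find hP, Nat.find_spec hP, ?_⟩
    rcases Nat.eq_zero_or_pos (Nat.find hP) with h0 | hpos
    · rw [h0]; simpa using hx1
    · obtain ⟨k, hk⟩ := Nat.exists_eq_succ_of_ne_zero hpos.ne'
      have := Nat.find_min hP (m := k) (by omega)
      rw [hk]
      push_neg at this
      simpa using this

lemma pairwise_disj : Pairwise (Function.onFun Disjoint
    (fun n : ℕ => Ioc ((1:ℝ)/2^(n+1)) (1/2^n))) := by
  have key : ∀ i j : ℕ, i < j → Disjoint (Ioc ((1:ℝ)/2^(i+1)) (1/2^i))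
      (Ioc ((1:ℝ)/2^(j+1)) (1/2^j)) := by
    intro i j hij
    rw [Set.Ioc_disjoint_Ioc]
    have hle : (1:ℝ)/2^j ≤ 1/2^(i+1) := by
      apply div_le_div_of_nonneg_left one_pos.le (by positivity)
      exact pow_le_pow_right₀ one_le_two hij
    calc min ((1:ℝ)/2^i) (1/2^j) ≤ 1/2^j := min_le_right _ _
      _ ≤ 1/2^(i+1) := hle
      _ ≤ max ((1:ℝ)/2^(i+1)) (1/2^(j+1)) := le_max_left _ _
  intro i j hij
  rcases lt_or_gt_of_ne hij with h | h
  · exact key i j h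
  · exact (key j i h).symm

/-- The tent construction `f` is Bochner integrable on `[0,1]` with integral the
restriction of `exp`, which is not a polynomial function. -/
theorem tent_integrable_integral_exp (f : ℝ → C(Set.Icc (0:ℝ) 1, ℝ))
    (h0 : f 0 = 0)
    (h1 : ∀ n : ℕ, ∀ x ∈ Set.Icc ((1:ℝ) / 2 ^ (n + 1)) (3 / 2 ^ (n + 2)),
      f x = ((2 ^ (2 * n + 4) / (n.factorial : ℝ)) * (x - 1 / 2 ^ (n + 1))) • eFun n)
    (h2 : ∀ n : ℕ, ∀ x ∈ Set.Icc ((3:ℝ) / 2 ^ (n + 2)) (1 / 2 ^ n),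
      f x = ((2 ^ (2 * n + 4) / (n.factorial : ℝ)) * (1 / 2 ^ n - x)) • eFun n)
    :
    IntervalIntegrable f volume 0 1 ∧
    (∫ x in (0:ℝ)..1, f x) = expFun ∧
    ¬ ∃ p : Polynomial ℝ, ∀ t : Set.Icc (0:ℝ) 1,
        (∫ x in (0:ℝ)..1, f x) t = p.eval (t : ℝ) := by
  have hpiece := fun n => piece n f (h1 n) (h2 n)
  set s : ℕ → Set ℝ := fun n => Ioc ((1:ℝ)/2^(n+1)) (1/2^n) with hs
  have hsummable : Summable fun n => ∫ x in s n, ‖f x‖ := by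
    refine Summable.of_nonneg_of_le
      (fun n => integral_nonneg fun x => norm_nonneg _)
      (fun n => (hpiece n).2.2) ?_
    have := (Real.summable_pow_div_factorial 1).mul_left 2
    exact this.congr fun n => by rw [one_pow]; ring
  have hIntU : IntegrableOn f (Ioc (0:ℝ) 1) volume := by
    rw [← cover]
    exact integrableOn_iUnion_of_summable_integral_norm
      (fun n => (hpiece n).1) hsummable
  have hHasSum : HasSum (fun n => ∫ x in s n, f x) (∫ x in Ioc (0:ℝ) 1, f x) := by
    have h := hasSum_integral_iUnion (μ := volume) (f := f)
      (fun n : ℕ => measurableSet_Ioc) pairwise_disj (by rw [cover]; exact hIntU)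
    rwa [cover] at h
  have hHasSum' : HasSum (fun n : ℕ => ((n.factorial:ℝ))⁻¹ • eFun n)
      (∫ x in Ioc (0:ℝ) 1, f x) := by
    have hfun : (fun n => ∫ x in s n, f x)
        = fun n : ℕ => ((n.factorial:ℝ))⁻¹ • eFun n := funext fun n => (hpiece n).2.1
    rwa [hfun] at hHasSum
  have hval : (∫ x in Ioc (0:ℝ) 1, f x) = expFun := hHasSum'.unique expHasSum
  have hII : IntervalIntegrable f volume 0 1 := by
    rw [intervalIntegrable_iff, uIoc_of_le zero_le_one]; exact hIntU
  have hIeq : (∫ x in (0:ℝ)..1, f x) = expFun := by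
    rw [intervalIntegral.integral_of_le zero_le_one]; exact hval
  refine ⟨hII, hIeq, ?_⟩
  rintro ⟨p, hp⟩
  simp only [hIeq] at hp
  have heq : Real.exp =ᶠ[nhds (1/2:ℝ)] fun t => p.eval t := by
    filter_upwards [Ioo_mem_nhds (by norm_num : (0:ℝ) < 1/2) (by norm_num : (1/2:ℝ) < 1)]
      with t ht
    exact hp ⟨t, Ioo_subset_Icc_self ht⟩
  have iter : ∀ k : ℕ, deriv^[k] Real.exp =ᶠ[nhds (1/2:ℝ)]
      deriv^[k] (fun t => p.eval t) := by
    intro k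
    induction k with
    | zero => exact heq
    | succ k ih =>
      rw [Function.iterate_succ_apply', Function.iterate_succ_apply']
      exact ih.deriv
  have polyIter : ∀ (k : ℕ) (q : Polynomial ℝ),
      deriv^[k] (fun t => q.eval t) = fun t => (Polynomial.derivative^[k] q).eval t := by
    intro k
    induction k with
    | zero => intro q; simp
    | succ k ih =>
      intro q
      rw [Function.iterate_succ_apply, Function.iterate_succ_apply]
      have : deriv (fun t => q.eval t) = fun t => q.derivative.eval t :=
        funext fun x => Polynomial.deriv (p := q)
      rw [this, ih]
  have hK := (iter (p.natDegree + 1)).eq_of_nhds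
  rw [Real.iter_deriv_exp, polyIter,
    Polynomial.iterate_derivative_eq_zero (Nat.lt_succ_self _)] at hK
  simp only [Polynomial.eval_zero] at hK
  exact absurd hK (Real.exp_pos _).ne'
end

section
/- Let E be a real normed space, (x_n) a sequence in E with x_0 = 0 and ‖x_n − x_{n−1}‖ ≤ 1/2^{2n} for n ≥ 2. Define f : [0,1] → E with f(0) = 0 and, on [1/2^n, 1/2^{n−1}], the tent function f(x) = 2^{2n+2}(x − 1/2^n)(x_n − x_{n−1}) for x ∈ [1/2^n, 3/2^{n+1}] and f(x) = 2^{2n+2}(4/2^{n+1} − x)(x_n − x_{n−1}) for x ∈ [3/2^{n+1}, 4/2^{n+1}] (with the appropriate normalization on [1/2,1]). Then f is continuous on [0,1]. -/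
open Set

private lemma contOn_union_closed {α β : Type*} [TopologicalSpace α] [TopologicalSpace β]
    {f : α → β} {s t : Set α} (hs : IsClosed s) (ht : IsClosed t)
    (hfs : ContinuousOn f s) (hft : ContinuousOn f t) : ContinuousOn f (s ∪ t) := by
  intro x hx
  have Hs : ContinuousWithinAt f s x := by
    by_cases h : x ∈ s
    · exact hfs x h
    · exact continuousWithinAt_of_notMem_closure (by rwa [hs.closure_eq])
  have Ht : ContinuousWithinAt f t x := by
    by_cases h : x ∈ t
    · exact hft x h
    · exact continuousWithinAt_of_notMem_closure (by rwa [ht.closure_eq])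
  exact Hs.union Ht

/-- The tent-function construction toward a Cauchy sequence `(x_n)` in a real
normed space `E` is continuous on `[0,1]`. -/
theorem general_tent_continuousOn {E : Type*} [NormedAddCommGroup E] [NormedSpace ℝ E]
    (xs : ℕ → E) (f : ℝ → E)
    (h0 : f 0 = 0) (hx0 : xs 0 = 0)
    (h1 : ∀ n : ℕ, 1 ≤ n → ∀ x ∈ Set.Icc ((1:ℝ) / 2 ^ n) (3 / 2 ^ (n + 1)),
      f x = ((2 ^ (2 * n + 2) : ℝ) * (x - 1 / 2 ^ n)) • (xs n - xs (n - 1)))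
    (h2 : ∀ n : ℕ, 1 ≤ n → ∀ x ∈ Set.Icc ((3:ℝ) / 2 ^ (n + 1)) (4 / 2 ^ (n + 1)),
      f x = ((2 ^ (2 * n + 2) : ℝ) * (4 / 2 ^ (n + 1) - x)) • (xs n - xs (n - 1)))
    (hxs : ∀ n : ℕ, 2 ≤ n → ‖xs n - xs (n - 1)‖ ≤ 1 / 2 ^ (2 * n))
    :
    ContinuousOn f (Set.Icc 0 1) := by
  have two_pow_pos : ∀ k : ℕ, (0:ℝ) < 2 ^ k := fun k => by positivity
  -- `f` is continuous on each dyadic piece `[1/2^(m+1), 1/2^m]`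
  have key : ∀ m : ℕ, ContinuousOn f (Set.Icc ((1:ℝ) / 2 ^ (m + 1)) (1 / 2 ^ m)) := by
    intro m
    set n := m + 1 with hn
    have h4 : (4:ℝ) / 2 ^ (n + 1) = 1 / 2 ^ m := by
      rw [hn]
      have : (2:ℝ) ^ (m + 1 + 1) = 4 * 2 ^ m := by ring
      rw [this]
      field_simp
    have hab : (1:ℝ) / 2 ^ n ≤ 3 / 2 ^ (n + 1) := by
      rw [div_le_div_iff₀ (two_pow_pos n) (two_pow_pos (n+1))]
      have : (2:ℝ) ^ (n + 1) = 2 * 2 ^ n := by ring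
      rw [this]; nlinarith [two_pow_pos n]
    have hbc : (3:ℝ) / 2 ^ (n + 1) ≤ 4 / 2 ^ (n + 1) := by
      gcongr <;> norm_num
    rw [← h4, ← Icc_union_Icc_eq_Icc hab hbc]
    apply contOn_union_closed isClosed_Icc isClosed_Icc
    · apply ContinuousOn.congr (f := fun x =>
        ((2 ^ (2 * n + 2) : ℝ) * (x - 1 / 2 ^ n)) • (xs n - xs (n - 1)))
      · exact ((continuous_const.mul (continuous_id.sub continuous_const)).smul
          continuous_const).continuousOn
      · intro x hx; exact h1 n (Nat.le_add_left 1 m) x hx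
    · apply ContinuousOn.congr (f := fun x =>
        ((2 ^ (2 * n + 2) : ℝ) * (4 / 2 ^ (n + 1) - x)) • (xs n - xs (n - 1)))
      · exact ((continuous_const.mul (continuous_const.sub continuous_id)).smul
          continuous_const).continuousOn
      · intro x hx; exact h2 n (Nat.le_add_left 1 m) x hx
  -- hence continuous on `[1/2^(N+1), 1]`
  have chain : ∀ N : ℕ, ContinuousOn f (Set.Icc ((1:ℝ) / 2 ^ (N + 1)) 1) := by
    intro N
    induction N with
    | zero => simpa using key 0
    | succ k ih =>
      have h1' : (1:ℝ) / 2 ^ (k + 1 + 1) ≤ 1 / 2 ^ (k + 1) := by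
        apply div_le_div_of_nonneg_left (by norm_num) (two_pow_pos (k+1))
        exact pow_le_pow_right₀ (by norm_num) (by omega)
      have h2' : (1:ℝ) / 2 ^ (k + 1) ≤ 1 := by
        rw [div_le_one (two_pow_pos (k+1))]
        exact one_le_pow₀ (by norm_num)
      rw [← Icc_union_Icc_eq_Icc h1' h2']
      exact contOn_union_closed isClosed_Icc isClosed_Icc (key (k + 1)) ih
  -- norm bound near 0
  have bound : ∀ x : ℝ, 0 < x → x ≤ 1 / 2 → ‖f x‖ ≤ 4 * x := by
    intro x hx0' hx12
    have hex : ∃ n : ℕ, 2 ≤ n ∧ (1:ℝ) / 2 ^ n ≤ x := by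
      obtain ⟨k, hk⟩ := exists_pow_lt_of_lt_one hx0' (by norm_num : (1:ℝ)/2 < 1)
      refine ⟨max k 2, le_max_right _ _, ?_⟩
      have : ((1:ℝ)/2) ^ max k 2 ≤ (1/2) ^ k :=
        pow_le_pow_of_le_one (by norm_num) (by norm_num) (le_max_left _ _)
      calc (1:ℝ) / 2 ^ max k 2 = (1/2) ^ max k 2 := by rw [one_div, one_div, inv_pow]
        _ ≤ (1/2) ^ k := this
        _ ≤ x := hk.le
    classical
    set n := Nat.find hex with hndef
    obtain ⟨hn2, hnx⟩ : 2 ≤ n ∧ (1:ℝ) / 2 ^ n ≤ x := Nat.find_spec hex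
    have hxle : x ≤ 1 / 2 ^ (n - 1) := by
      rcases eq_or_lt_of_le hn2 with h | h
      · have : n - 1 = 1 := by omega
        rw [this]; norm_num; linarith
      · have hmin := Nat.find_min hex (m := n - 1) (by omega)
        push_neg at hmin
        have := hmin (by omega)
        linarith
    have hd : ‖xs n - xs (n - 1)‖ ≤ 1 / 2 ^ (2 * n) := hxs n hn2
    have hdnn : (0:ℝ) ≤ ‖xs n - xs (n - 1)‖ := norm_nonneg _
    have h4eq : (4:ℝ) / 2 ^ (n + 1) = 1 / 2 ^ (n - 1) := by
      have hrw : n + 1 = (n - 1) + 2 := by omega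
      rw [hrw]
      have : (2:ℝ) ^ ((n-1) + 2) = 4 * 2 ^ (n-1) := by ring
      rw [this]; field_simp
    have hpow : (2:ℝ) ^ (2 * n + 2) * (1 / 2 ^ (n + 1)) * (1 / 2 ^ (2 * n)) = 2 / 2 ^ n := by
      have e1 : (2:ℝ) ^ (2*n+2) = 2^(2*n) * 4 := by rw [pow_add]; norm_num
      have e2 : (2:ℝ) ^ (n+1) = 2^n * 2 := by rw [pow_add]; norm_num
      rw [e1, e2]
      field_simp
      ring
    have hfinal : (2:ℝ) / 2 ^ n ≤ 4 * x := by
      have : (2:ℝ)/2^n = 2 * (1/2^n) := by ring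
      rw [this]; nlinarith
    rcases le_or_gt x (3 / 2 ^ (n + 1)) with hle | hlt
    · have hfx := h1 n (by omega) x ⟨hnx, hle⟩
      rw [hfx, norm_smul, Real.norm_eq_abs]
      have hcnn : 0 ≤ (2 ^ (2 * n + 2) : ℝ) * (x - 1 / 2 ^ n) := by
        have := two_pow_pos (2*n+2); nlinarith
      rw [abs_of_nonneg hcnn]
      have hcle : (2 ^ (2 * n + 2) : ℝ) * (x - 1 / 2 ^ n) ≤ 2 ^ (2*n+2) * (1 / 2 ^ (n+1)) := by
        apply mul_le_mul_of_nonneg_left _ (two_pow_pos (2*n+2)).le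
        have epow : (2:ℝ)^(n+1) = 2 * 2^n := by ring
        have e1 : (1:ℝ)/2^n = 2 * (1/2^(n+1)) := by
          rw [epow]; field_simp
        have e3 : (3:ℝ)/2^(n+1) = 3 * (1/2^(n+1)) := by ring
        linarith
      calc (2 ^ (2 * n + 2) : ℝ) * (x - 1 / 2 ^ n) * ‖xs n - xs (n-1)‖
          ≤ 2 ^ (2*n+2) * (1 / 2 ^ (n+1)) * (1 / 2 ^ (2*n)) := by
            apply mul_le_mul hcle hd hdnn
            positivity
        _ = 2 / 2 ^ n := hpow
        _ ≤ 4 * x := hfinal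
    · have hx4 : x ≤ 4 / 2 ^ (n + 1) := by rw [h4eq]; exact hxle
      have hfx := h2 n (by omega) x ⟨hlt.le, hx4⟩
      rw [hfx, norm_smul, Real.norm_eq_abs]
      have hcnn : 0 ≤ (2 ^ (2 * n + 2) : ℝ) * (4 / 2 ^ (n + 1) - x) := by
        have := two_pow_pos (2*n+2); nlinarith
      rw [abs_of_nonneg hcnn]
      have hcle : (2 ^ (2 * n + 2) : ℝ) * (4 / 2 ^ (n + 1) - x) ≤ 2 ^ (2*n+2) * (1 / 2 ^ (n+1)) := by
        apply mul_le_mul_of_nonneg_left _ (two_pow_pos (2*n+2)).le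
        have e3 : (3:ℝ)/2^(n+1) = 3 * (1/2^(n+1)) := by ring
        have e4 : (4:ℝ)/2^(n+1) = 4 * (1/2^(n+1)) := by ring
        linarith
      calc (2 ^ (2 * n + 2) : ℝ) * (4 / 2 ^ (n + 1) - x) * ‖xs n - xs (n-1)‖
          ≤ 2 ^ (2*n+2) * (1 / 2 ^ (n+1)) * (1 / 2 ^ (2*n)) := by
            apply mul_le_mul hcle hd hdnn
            positivity
        _ = 2 / 2 ^ n := hpow
        _ ≤ 4 * x := hfinal
  -- main
  intro a ha
  rcases eq_or_lt_of_le ha.1 with h0a | h0a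
  · -- a = 0
    subst h0a
    unfold ContinuousWithinAt
    rw [h0]
    apply squeeze_zero_norm' (a := fun x => 4 * x)
    · have hIio : Iio ((1:ℝ)/2) ∈ nhdsWithin (0:ℝ) (Icc 0 1) :=
        mem_nhdsWithin_of_mem_nhds (Iio_mem_nhds (by norm_num))
      filter_upwards [hIio, self_mem_nhdsWithin] with x hx1 hx2
      rcases eq_or_lt_of_le hx2.1 with h | h
      · simp [← h, h0]
      · exact bound x h hx1.le
    · have h4x : Filter.Tendsto (fun x : ℝ => 4 * x) (nhds (0:ℝ)) (nhds (4 * 0)) :=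
        Continuous.tendsto (by continuity : Continuous fun x : ℝ => 4 * x) 0
      simpa using h4x.mono_left nhdsWithin_le_nhds
  · -- 0 < a
    obtain ⟨k, hk⟩ := exists_pow_lt_of_lt_one h0a (by norm_num : (1:ℝ)/2 < 1)
    have hlt : (1:ℝ) / 2 ^ (k + 1) < a := by
      have e : (1:ℝ)/2^(k+1) = (1/2)^(k+1) := by rw [one_div, one_div, inv_pow]
      have : ((1:ℝ)/2)^(k+1) ≤ (1/2)^k :=
        pow_le_pow_of_le_one (by norm_num) (by norm_num) (by omega)
      linarith [e ▸ this]
    have hcw : ContinuousWithinAt f (Set.Icc ((1:ℝ)/2^(k+1)) 1) a :=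
      (chain k) a ⟨hlt.le, ha.2⟩
    apply hcw.mono_of_mem_nhdsWithin
    have hIci : Ici ((1:ℝ)/2^(k+1)) ∈ nhdsWithin a (Icc 0 1) :=
      mem_nhdsWithin_of_mem_nhds (Ici_mem_nhds hlt)
    have := Filter.inter_mem hIci self_mem_nhdsWithin
    apply Filter.mem_of_superset this
    rintro x ⟨hx1, hx2⟩
    exact ⟨hx1, hx2.2⟩
end

section
/- With f as in the general construction (tent function on [1/2^n, 1/2^{n−1}] integrating to x_n − x_{n−1}), for every n ≥ 1, the Bochner integral ∫_{1/2^n}^{1} f = x_n in E. -/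
open Filter Topology

/-- `HasRiemannIntegral f a b y` : the Riemann sums of `f` over tagged partitions of
`[a, b]` converge to `y ∈ E` as the mesh tends to `0`. -/
def HasRiemannIntegral {E : Type*} [NormedAddCommGroup E] [NormedSpace ℝ E]
    (f : ℝ → E) (a b : ℝ) (y : E) : Prop :=
  ∀ ε > 0, ∃ δ > 0, ∀ (n : ℕ) (p t : ℕ → ℝ),
    p 0 = a → p n = b → (∀ i < n, p i < p (i + 1)) →
    (∀ i < n, p (i + 1) - p i < δ) →
    (∀ i < n, t i ∈ Set.Icc (p i) (p (i + 1))) →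
    ‖(∑ i ∈ Finset.range n, (p (i + 1) - p i) • f (t i)) - y‖ < ε

section Aux

lemma partition_mono (p : ℕ → ℝ) (m : ℕ) (hmono : ∀ i < m, p i < p (i + 1)) :
    ∀ i j, i ≤ j → j ≤ m → p i ≤ p j := by
  intro i j hij hjm
  induction hij with
  | refl => exact le_rfl
  | @step k hk ih =>
      exact (ih ((Nat.le_succ k).trans hjm)).trans (hmono k (Nat.lt_of_succ_le hjm)).le

lemma partition_subset (p : ℕ → ℝ) (m : ℕ) (a b : ℝ) (hp0 : p 0 = a) (hpm : p m = b)
    (hmono : ∀ i < m, p i < p (i + 1)) :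
    ∀ i < m, Set.Icc (p i) (p (i + 1)) ⊆ Set.Icc a b := by
  intro i him x hx
  have h1 : a ≤ p i := hp0 ▸ partition_mono p m hmono 0 i (Nat.zero_le i) him.le
  have h2 : p (i + 1) ≤ b := hpm ▸ partition_mono p m hmono (i + 1) m him le_rfl
  exact ⟨h1.trans hx.1, hx.2.trans h2⟩

open MeasureTheory intervalIntegral in
lemma riemann_of_continuousOn {E : Type*} [NormedAddCommGroup E] [NormedSpace ℝ E]
    [CompleteSpace E] (f : ℝ → E) (a b : ℝ) (hab : a ≤ b)
    (hf : ContinuousOn f (Set.Icc a b)) :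
    HasRiemannIntegral f a b (∫ x in a..b, f x) := by
  intro ε hε
  have hba : (0:ℝ) < b - a + 1 := by linarith
  set ε' := ε / (b - a + 1) with hε'def
  have hε'pos : 0 < ε' := div_pos hε hba
  have hu : UniformContinuousOn f (Set.Icc a b) :=
    isCompact_Icc.uniformContinuousOn_of_continuous hf
  rw [Metric.uniformContinuousOn_iff] at hu
  obtain ⟨δ, hδpos, hδ⟩ := hu ε' hε'pos
  refine ⟨δ, hδpos, ?_⟩
  intro m p t hp0 hpm hmono hmesh ht
  have hsub := partition_subset p m a b hp0 hpm hmono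
  have hint : ∀ i < m, IntervalIntegrable f volume (p i) (p (i + 1)) := by
    intro i him
    have hsu : Set.uIcc (p i) (p (i + 1)) ⊆ Set.Icc a b := by
      rw [Set.uIcc_of_le (hmono i him).le]; exact hsub i him
    exact (hf.mono hsu).intervalIntegrable
  have hsum : ∫ x in a..b, f x = ∑ i ∈ Finset.range m, ∫ x in p i..p (i + 1), f x := by
    rw [intervalIntegral.sum_integral_adjacent_intervals hint, hp0, hpm]
  rw [hsum, ← Finset.sum_sub_distrib]
  have hbound : ∀ i ∈ Finset.range m,
      ‖(p (i + 1) - p i) • f (t i) - ∫ x in p i..p (i + 1), f x‖ ≤ ε' * (p (i + 1) - p i) := by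
    intro i hi
    rw [Finset.mem_range] at hi
    have hpi : p i ≤ p (i + 1) := (hmono i hi).le
    have hfi : (p (i + 1) - p i) • f (t i) = ∫ _x in p i..p (i + 1), f (t i) := by
      rw [intervalIntegral.integral_const]
    rw [hfi, ← intervalIntegral.integral_sub (intervalIntegrable_const) (hint i hi)]
    have hb : ∀ x ∈ Set.uIoc (p i) (p (i + 1)), ‖f (t i) - f x‖ ≤ ε' := by
      intro x hx
      rw [Set.uIoc_of_le hpi] at hx
      have hxI : x ∈ Set.Icc (p i) (p (i + 1)) := ⟨hx.1.le, hx.2⟩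
      have htI := ht i hi
      have hd : dist (t i) x < δ := by
        rw [Real.dist_eq]
        have : |t i - x| ≤ p (i + 1) - p i := by
          rw [abs_le]
          constructor
          · linarith [htI.1, htI.2, hxI.1, hxI.2]
          · linarith [htI.1, htI.2, hxI.1, hxI.2]
        exact lt_of_le_of_lt this (hmesh i hi)
      have := hδ (t i) (hsub i hi htI) x (hsub i hi hxI) hd
      rw [dist_eq_norm] at this
      exact this.le
    have := intervalIntegral.norm_integral_le_of_norm_le_const hb
    rw [abs_of_nonneg (by linarith)] at this
    linarith
  calc ‖∑ i ∈ Finset.range m, ((p (i + 1) - p i) • f (t i) - ∫ x in p i..p (i + 1), f x)‖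
      ≤ ∑ i ∈ Finset.range m, ε' * (p (i + 1) - p i) :=
        norm_sum_le_of_le _ hbound
    _ = ε' * (b - a) := by
        rw [← Finset.mul_sum, Finset.sum_range_sub, hp0, hpm]
    _ < ε := by
        rw [hε'def, div_mul_eq_mul_div, div_lt_iff₀ hba]
        nlinarith

open MeasureTheory intervalIntegral in
lemma affine_up {E : Type*} [NormedAddCommGroup E] [NormedSpace ℝ E] [CompleteSpace E]
    (c a b : ℝ) (v : E) :
    ∫ x in a..b, (c * (x - a)) • v = (c * (b - a) ^ 2 / 2) • v := by
  rw [intervalIntegral.integral_smul_const]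
  congr 1
  rw [intervalIntegral.integral_const_mul]
  rw [intervalIntegral.integral_sub intervalIntegrable_id intervalIntegrable_const,
    integral_id, intervalIntegral.integral_const, smul_eq_mul]
  ring

open MeasureTheory intervalIntegral in
lemma affine_down {E : Type*} [NormedAddCommGroup E] [NormedSpace ℝ E] [CompleteSpace E]
    (c d a b : ℝ) (v : E) :
    ∫ x in a..b, (c * (d - x)) • v = (c * ((d - a) ^ 2 - (d - b) ^ 2) / 2) • v := by
  rw [intervalIntegral.integral_smul_const]
  congr 1
  rw [intervalIntegral.integral_const_mul]
  rw [intervalIntegral.integral_sub intervalIntegrable_const intervalIntegrable_id,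
    integral_id, intervalIntegral.integral_const, smul_eq_mul]
  ring

lemma contOn_union_Icc {E : Type*} [NormedAddCommGroup E] {f : ℝ → E} {a b c : ℝ}
    (h1 : ContinuousOn f (Set.Icc a b)) (h2 : ContinuousOn f (Set.Icc b c))
    (hab : a ≤ b) (hbc : b ≤ c) : ContinuousOn f (Set.Icc a c) := by
  rw [← Set.Icc_union_Icc_eq_Icc hab hbc]
  intro x hx
  rcases hx with hx | hx
  · refine ContinuousWithinAt.union (h1 x hx) ?_
    by_cases hxt : x ∈ Set.Icc b c
    · exact h2 x hxt
    · exact continuousWithinAt_of_notMem_closure (by rwa [isClosed_Icc.closure_eq])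
  · refine ContinuousWithinAt.union ?_ (h2 x hx)
    by_cases hxt : x ∈ Set.Icc a b
    · exact h1 x hxt
    · exact continuousWithinAt_of_notMem_closure (by rwa [isClosed_Icc.closure_eq])

lemma tent_facts (j : ℕ) :
    ((1:ℝ) / 2 ^ (j + 1) ≤ 3 / 2 ^ (j + 2)) ∧ ((3:ℝ) / 2 ^ (j + 2) ≤ 4 / 2 ^ (j + 2)) ∧
      ((4:ℝ) / 2 ^ (j + 2) = 1 / 2 ^ j) := by
  have h2 : (0:ℝ) < 2 ^ j := by positivity
  refine ⟨?_, ?_, ?_⟩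
  · rw [div_le_div_iff₀ (by positivity) (by positivity)]; ring_nf; nlinarith
  · gcongr
    norm_num
  · rw [div_eq_div_iff (by positivity) (by positivity)]; ring

lemma tent_cont {E : Type*} [NormedAddCommGroup E] [NormedSpace ℝ E]
    (f : ℝ → E) (v : E) (k : ℕ) (hk : 1 ≤ k)
    (H1 : ∀ x ∈ Set.Icc ((1:ℝ) / 2 ^ k) (3 / 2 ^ (k + 1)),
      f x = ((2 ^ (2 * k + 2) : ℝ) * (x - 1 / 2 ^ k)) • v)
    (H2 : ∀ x ∈ Set.Icc ((3:ℝ) / 2 ^ (k + 1)) (4 / 2 ^ (k + 1)),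
      f x = ((2 ^ (2 * k + 2) : ℝ) * (4 / 2 ^ (k + 1) - x)) • v) :
    ContinuousOn f (Set.Icc ((1:ℝ) / 2 ^ k) (1 / 2 ^ (k - 1))) := by
  obtain ⟨j, rfl⟩ : ∃ j, k = j + 1 := ⟨k - 1, (Nat.succ_pred_eq_of_pos hk).symm⟩
  obtain ⟨hf1, hf2, hf3⟩ := tent_facts j
  simp only [Nat.add_sub_cancel]
  rw [← hf3]
  refine contOn_union_Icc ?_ ?_ hf1 hf2
  · have : ContinuousOn (fun x : ℝ => ((2 ^ (2 * (j + 1) + 2) : ℝ) * (x - 1 / 2 ^ (j + 1))) • v)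
        (Set.Icc ((1:ℝ) / 2 ^ (j + 1)) (3 / 2 ^ (j + 2))) := by fun_prop
    exact this.congr fun x hx => H1 x hx
  · have : ContinuousOn (fun x : ℝ => ((2 ^ (2 * (j + 1) + 2) : ℝ) * (4 / 2 ^ (j + 2) - x)) • v)
        (Set.Icc ((3:ℝ) / 2 ^ (j + 2)) (4 / 2 ^ (j + 2))) := by fun_prop
    exact this.congr fun x hx => H2 x hx

open MeasureTheory intervalIntegral in
lemma tent_integral {E : Type*} [NormedAddCommGroup E] [NormedSpace ℝ E] [CompleteSpace E]
    (f : ℝ → E) (v : E) (k : ℕ) (hk : 1 ≤ k)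
    (H1 : ∀ x ∈ Set.Icc ((1:ℝ) / 2 ^ k) (3 / 2 ^ (k + 1)),
      f x = ((2 ^ (2 * k + 2) : ℝ) * (x - 1 / 2 ^ k)) • v)
    (H2 : ∀ x ∈ Set.Icc ((3:ℝ) / 2 ^ (k + 1)) (4 / 2 ^ (k + 1)),
      f x = ((2 ^ (2 * k + 2) : ℝ) * (4 / 2 ^ (k + 1) - x)) • v) :
    ∫ x in ((1:ℝ) / 2 ^ k)..(1 / 2 ^ (k - 1)), f x = v := by
  obtain ⟨j, rfl⟩ : ∃ j, k = j + 1 := ⟨k - 1, (Nat.succ_pred_eq_of_pos hk).symm⟩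
  obtain ⟨hf1, hf2, hf3⟩ := tent_facts j
  simp only [Nat.add_sub_cancel]
  rw [← hf3]
  set a : ℝ := 1 / 2 ^ (j + 1) with ha
  set mm : ℝ := 3 / 2 ^ (j + 2) with hm
  set b : ℝ := 4 / 2 ^ (j + 2) with hb
  set c : ℝ := (2 : ℝ) ^ (2 * (j + 1) + 2) with hc
  have e1 : ∫ x in a..mm, f x = ∫ x in a..mm, (c * (x - a)) • v :=
    intervalIntegral.integral_congr (fun x hx => by
      rw [Set.uIcc_of_le hf1] at hx; exact H1 x hx)
  have e2 : ∫ x in mm..b, f x = ∫ x in mm..b, (c * (b - x)) • v :=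
    intervalIntegral.integral_congr (fun x hx => by
      rw [Set.uIcc_of_le hf2] at hx; exact H2 x hx)
  have i1 : IntervalIntegrable f volume a mm := by
    rw [intervalIntegrable_iff_integrableOn_Icc_of_le hf1]
    have : ContinuousOn (fun x : ℝ => (c * (x - a)) • v) (Set.Icc a mm) := by fun_prop
    exact (this.congr fun x hx => H1 x hx).integrableOn_compact isCompact_Icc
  have i2 : IntervalIntegrable f volume mm b := by
    rw [intervalIntegrable_iff_integrableOn_Icc_of_le hf2]
    have : ContinuousOn (fun x : ℝ => (c * (b - x)) • v) (Set.Icc mm b) := by fun_prop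
    exact (this.congr fun x hx => H2 x hx).integrableOn_compact isCompact_Icc
  rw [← intervalIntegral.integral_add_adjacent_intervals i1 i2, e1, e2, affine_up, affine_down]
  rw [← add_smul]
  have h2j : (0:ℝ) < 2 ^ j := by positivity
  have : c * (mm - a) ^ 2 / 2 + c * ((b - mm) ^ 2 - (b - b) ^ 2) / 2 = 1 := by
    rw [ha, hm, hb, hc]
    have e2j : (2:ℝ) ^ (2 * (j + 1) + 2) = (2 ^ j) ^ 2 * 16 := by ring
    rw [e2j]
    field_simp
    ring
  rw [this, one_smul]

end Aux

/-- For the general tent construction, for every `n ≥ 1`, the integral of `f`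
over `[1/2^n, 1]` exists in `E` and equals `x_n`. -/
theorem general_tent_integral {E : Type*} [NormedAddCommGroup E] [NormedSpace ℝ E]
    (xs : ℕ → E) (f : ℝ → E)
    (h0 : f 0 = 0) (hx0 : xs 0 = 0)
    (h1 : ∀ n : ℕ, 1 ≤ n → ∀ x ∈ Set.Icc ((1:ℝ) / 2 ^ n) (3 / 2 ^ (n + 1)),
      f x = ((2 ^ (2 * n + 2) : ℝ) * (x - 1 / 2 ^ n)) • (xs n - xs (n - 1)))
    (h2 : ∀ n : ℕ, 1 ≤ n → ∀ x ∈ Set.Icc ((3:ℝ) / 2 ^ (n + 1)) (4 / 2 ^ (n + 1)),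
      f x = ((2 ^ (2 * n + 2) : ℝ) * (4 / 2 ^ (n + 1) - x)) • (xs n - xs (n - 1)))
    (hxs : ∀ n : ℕ, 2 ≤ n → ‖xs n - xs (n - 1)‖ ≤ 1 / 2 ^ (2 * n))
    :
    ∀ n : ℕ, 1 ≤ n → HasRiemannIntegral f ((1:ℝ) / 2 ^ n) 1 (xs n) := by
  intro n hn
  classical
  -- the finite-dimensional subspace containing all relevant values
  set S : Submodule ℝ E := Submodule.span ℝ (xs '' Set.Iic n) with hS
  haveI : FiniteDimensional ℝ S :=
    FiniteDimensional.span_of_finite ℝ ((Set.finite_Iic n).image xs)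
  have hxsS : ∀ k ≤ n, xs k ∈ S := fun k hk => Submodule.subset_span ⟨k, hk, rfl⟩
  -- basic inequalities
  have hpow : ∀ k : ℕ, k ≤ n → (1:ℝ) / 2 ^ n ≤ 1 / 2 ^ k := by
    intro k hk
    gcongr
    norm_num
  have h1le : ∀ k : ℕ, (1:ℝ) / 2 ^ k ≤ 1 := by
    intro k
    rw [div_le_one (by positivity)]
    exact one_le_pow₀ (by norm_num)
  have h34 : ∀ k : ℕ, 1 ≤ k → (3:ℝ) / 2 ^ (k + 1) ≤ 1 := by
    intro k hk
    rw [div_le_one (by positivity)]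
    calc (3:ℝ) ≤ 2 ^ 2 := by norm_num
      _ ≤ 2 ^ (k + 1) := by
          gcongr
          · norm_num
          · omega
  -- every point of [1/2^n, 1] lies in some tent interval
  have cover : ∀ m : ℕ, 1 ≤ m → ∀ x ∈ Set.Icc ((1:ℝ) / 2 ^ m) 1,
      ∃ k, 1 ≤ k ∧ k ≤ m ∧ x ∈ Set.Icc ((1:ℝ) / 2 ^ k) ((1:ℝ) / 2 ^ (k - 1)) := by
    intro m hm
    induction m, hm using Nat.le_induction with
    | base =>
        intro x hx
        exact ⟨1, le_rfl, le_rfl, by simpa using hx⟩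
    | succ m hm ih =>
        intro x hx
        by_cases hxle : x ≤ 1 / 2 ^ m
        · exact ⟨m + 1, by omega, le_rfl, by simpa using Set.mem_Icc.mpr ⟨hx.1, hxle⟩⟩
        · exact (ih x ⟨le_of_not_ge hxle, hx.2⟩).imp fun k ⟨a, b, c⟩ => ⟨a, by omega, c⟩
  have hv : ∀ k ≤ n, xs k - xs (k - 1) ∈ S := fun k hk =>
    sub_mem (hxsS k hk) (hxsS (k - 1) ((Nat.pred_le k).trans hk))
  have hmem : ∀ x ∈ Set.Icc ((1:ℝ) / 2 ^ n) 1, f x ∈ S := by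
    intro x hx
    obtain ⟨k, hk1, hkn, hxk⟩ := cover n hn x hx
    obtain ⟨j, hjk⟩ : ∃ j, k = j + 1 := ⟨k - 1, (Nat.succ_pred_eq_of_pos hk1).symm⟩
    have hb4 : (4:ℝ) / 2 ^ (k + 1) = 1 / 2 ^ (k - 1) := by
      subst hjk; simpa using (tent_facts j).2.2
    by_cases hx3 : x ≤ 3 / 2 ^ (k + 1)
    · rw [h1 k hk1 x ⟨hxk.1, hx3⟩]
      exact S.smul_mem _ (hv k hkn)
    · rw [h2 k hk1 x ⟨le_of_not_ge hx3, by rw [hb4]; exact hxk.2⟩]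
      exact S.smul_mem _ (hv k hkn)
  set f' : ℝ → E := fun x => if x ∈ Set.Icc ((1:ℝ) / 2 ^ n) 1 then f x else 0 with hf'
  have hmem' : ∀ x, f' x ∈ S := by
    intro x
    simp only [hf']
    split
    · exact hmem x ‹_›
    · exact S.zero_mem
  set g : ℝ → S := fun x => ⟨f' x, hmem' x⟩ with hgdef
  have hg_eq : ∀ x ∈ Set.Icc ((1:ℝ) / 2 ^ n) 1, (g x : E) = f x := by
    intro x hx
    show f' x = f x
    simp only [hf']
    rw [if_pos hx]
  set w : ℕ → S := fun k => if h : k ≤ n then ⟨xs k - xs (k - 1), hv k h⟩ else 0 with hwdef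
  have hw : ∀ k ≤ n, (w k : E) = xs k - xs (k - 1) := by
    intro k hk
    simp [hwdef, hk]
  have H1g : ∀ k : ℕ, 1 ≤ k → k ≤ n → ∀ x ∈ Set.Icc ((1:ℝ) / 2 ^ k) (3 / 2 ^ (k + 1)),
      g x = ((2 ^ (2 * k + 2) : ℝ) * (x - 1 / 2 ^ k)) • w k := by
    intro k hk1 hkn x hx
    have hxI : x ∈ Set.Icc ((1:ℝ) / 2 ^ n) 1 :=
      ⟨(hpow k hkn).trans hx.1, hx.2.trans (h34 k hk1)⟩
    apply Subtype.ext
    rw [SetLike.val_smul, hw k hkn, hg_eq x hxI]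
    exact h1 k hk1 x hx
  have H2g : ∀ k : ℕ, 1 ≤ k → k ≤ n → ∀ x ∈ Set.Icc ((3:ℝ) / 2 ^ (k + 1)) (4 / 2 ^ (k + 1)),
      g x = ((2 ^ (2 * k + 2) : ℝ) * (4 / 2 ^ (k + 1) - x)) • w k := by
    intro k hk1 hkn x hx
    obtain ⟨j, hjk⟩ : ∃ j, k = j + 1 := ⟨k - 1, (Nat.succ_pred_eq_of_pos hk1).symm⟩
    have hf1 : (1:ℝ) / 2 ^ k ≤ 3 / 2 ^ (k + 1) := by
      subst hjk; exact (tent_facts j).1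
    have hb4 : (4:ℝ) / 2 ^ (k + 1) = 1 / 2 ^ (k - 1) := by
      subst hjk; simpa using (tent_facts j).2.2
    have hxI : x ∈ Set.Icc ((1:ℝ) / 2 ^ n) 1 := by
      constructor
      · exact (hpow k hkn).trans (hf1.trans hx.1)
      · exact hx.2.trans (hb4 ▸ h1le (k - 1))
    apply Subtype.ext
    rw [SetLike.val_smul, hw k hkn, hg_eq x hxI]
    exact h2 k hk1 x hx
  haveI : CompleteSpace S := FiniteDimensional.complete ℝ S
  have main : ∀ m : ℕ, 1 ≤ m → ∀ hmn : m ≤ n, ContinuousOn g (Set.Icc ((1:ℝ) / 2 ^ m) 1) ∧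
      (∫ x in ((1:ℝ) / 2 ^ m)..1, g x) = ⟨xs m, hxsS m hmn⟩ := by
    intro m hm
    induction m, hm using Nat.le_induction with
    | base =>
        intro h1n
        have c1 := tent_cont g (w 1) 1 le_rfl (H1g 1 le_rfl h1n) (H2g 1 le_rfl h1n)
        have i1 := tent_integral g (w 1) 1 le_rfl (H1g 1 le_rfl h1n) (H2g 1 le_rfl h1n)
        have hone : ((1:ℝ) / 2 ^ (1 - 1)) = 1 := by norm_num
        rw [hone] at c1 i1
        refine ⟨c1, ?_⟩
        rw [i1]
        apply Subtype.ext
        rw [hw 1 h1n]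
        simp [hx0]
    | succ m hm ih =>
        intro hmn
        have hmn' : m ≤ n := by omega
        obtain ⟨ihc, ihi⟩ := ih hmn'
        have hms : ((1:ℝ) / 2 ^ (m + 1 - 1)) = 1 / 2 ^ m := by norm_num
        have c1 := tent_cont g (w (m + 1)) (m + 1) (by omega)
          (H1g (m + 1) (by omega) hmn) (H2g (m + 1) (by omega) hmn)
        have i1 := tent_integral g (w (m + 1)) (m + 1) (by omega)
          (H1g (m + 1) (by omega) hmn) (H2g (m + 1) (by omega) hmn)
        rw [hms] at c1 i1
        have h2m : (0:ℝ) < 2 ^ m := by positivity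
        have hle1 : (1:ℝ) / 2 ^ (m + 1) ≤ 1 / 2 ^ m := by
          rw [pow_succ, div_le_div_iff₀ (by positivity) h2m]
          nlinarith
        refine ⟨contOn_union_Icc c1 ihc hle1 (h1le m), ?_⟩
        have iI1 : IntervalIntegrable g MeasureTheory.volume ((1:ℝ) / 2 ^ (m + 1)) (1 / 2 ^ m) := by
          apply ContinuousOn.intervalIntegrable
          rwa [Set.uIcc_of_le hle1]
        have iI2 : IntervalIntegrable g MeasureTheory.volume ((1:ℝ) / 2 ^ m) 1 := by
          apply ContinuousOn.intervalIntegrable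
          rwa [Set.uIcc_of_le (h1le m)]
        rw [← intervalIntegral.integral_add_adjacent_intervals iI1 iI2, i1, ihi]
        apply Subtype.ext
        rw [Submodule.coe_add, hw (m + 1) hmn]
        simp
  have hcont := (main n hn le_rfl).1
  have hval := (main n hn le_rfl).2
  have hR := riemann_of_continuousOn g ((1:ℝ) / 2 ^ n) 1 (h1le n) hcont
  rw [hval] at hR
  intro ε hε
  obtain ⟨δ, hδpos, H⟩ := hR ε hε
  refine ⟨δ, hδpos, ?_⟩
  intro m p t hp0 hpm hmono hmesh ht
  have key := H m p t hp0 hpm hmono hmesh ht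
  have hsub := partition_subset p m _ 1 hp0 hpm hmono
  have hEq : (∑ i ∈ Finset.range m, (p (i + 1) - p i) • f (t i)) - xs n
      = (((∑ i ∈ Finset.range m, (p (i + 1) - p i) • g (t i))
          - ⟨xs n, hxsS n le_rfl⟩ : S) : E) := by
    rw [Submodule.coe_sub, AddSubmonoidClass.coe_finset_sum]
    congr 1
    apply Finset.sum_congr rfl
    intro i hi
    rw [SetLike.val_smul, hg_eq (t i) (hsub i (Finset.mem_range.mp hi) (ht i (Finset.mem_range.mp hi)))]
  rw [hEq]
  exact key
end

section
/- There exists a continuous function f from the interval [-1,1] into a real normed vector space E (namely E = polynomial functions on [0,1] with sup norm) such that f is integrable on [-1,1] (with integral 0) but is not integrable on [0,1] nor on [-1,0]; in particular, the Chasles (interval additivity) property fails for E-valued integrals. -/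
open Filter Topology intervalIntegral

/-- The subspace of `C([0,1], ℝ)` consisting of restrictions of real polynomials. -/
def polySubmodule : Submodule ℝ C(Set.Icc (0:ℝ) 1, ℝ) where
  carrier := {g | ∃ p : Polynomial ℝ, ∀ t : Set.Icc (0:ℝ) 1, g t = p.eval (t : ℝ)}
  add_mem' := by
    rintro a b ⟨p, hp⟩ ⟨q, hq⟩
    exact ⟨p + q, fun t => by simp [hp t, hq t]⟩
  zero_mem' := ⟨0, fun t => by simp⟩
  smul_mem' := by
    rintro c a ⟨p, hp⟩
    exact ⟨Polynomial.C c * p, fun t => by simp [hp t]⟩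

section Core
variable {E : Type*} [NormedAddCommGroup E] [NormedSpace ℝ E] [CompleteSpace E]

lemma partition_sum_integral (g : ℝ → E) (hg : Continuous g) (n : ℕ) (p : ℕ → ℝ) :
    (∑ i ∈ Finset.range n, ∫ x in (p i)..(p (i+1)), g x) = ∫ x in (p 0)..(p n), g x := by
  induction n with
  | zero => simp
  | succ n ih =>
      rw [Finset.sum_range_succ, ih, integral_add_adjacent_intervals] <;>
        exact hg.intervalIntegrable _ _

lemma mono_of_inc (n : ℕ) (p : ℕ → ℝ) (hinc : ∀ i < n, p i < p (i + 1)) :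
    ∀ i ≤ n, ∀ j ≤ n, i ≤ j → p i ≤ p j := by
  intro i hi j hj hij
  obtain ⟨d, rfl⟩ := Nat.exists_eq_add_of_le hij
  clear hij hi
  induction d with
  | zero => simp
  | succ d ih =>
      have h1 : i + d < n := by omega
      have h2 := hinc (i + d) h1
      have h3 : p i ≤ p (i + d) := ih (by omega)
      have h4 : i + (d + 1) = (i + d) + 1 := rfl
      rw [h4]; linarith

lemma hasRiemannIntegral_of_continuous (g : ℝ → E) (hg : Continuous g) (a b : ℝ) (hab : a < b) :
    HasRiemannIntegral g a b (∫ x in a..b, g x) := by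
  intro ε hε
  have hε' : 0 < ε / (2 * (b - a)) := div_pos hε (by linarith)
  set ε' := ε / (2 * (b - a)) with hε'def
  have hUC : UniformContinuousOn g (Set.Icc a b) :=
    isCompact_Icc.uniformContinuousOn_of_continuous hg.continuousOn
  rw [Metric.uniformContinuousOn_iff] at hUC
  obtain ⟨δ, hδ, hδ'⟩ := hUC ε' hε'
  refine ⟨δ, hδ, fun n p t hp0 hpn hinc hmesh ht => ?_⟩
  have hmono := mono_of_inc n p hinc
  have hbd : ∀ i ≤ n, p i ∈ Set.Icc a b := fun i hi =>
    ⟨hp0 ▸ hmono 0 (Nat.zero_le _) i hi (Nat.zero_le _),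
     hpn ▸ hmono i hi n le_rfl hi⟩
  have hIcc : ∀ i < n, Set.Icc (p i) (p (i+1)) ⊆ Set.Icc a b := by
    intro i hi x hx
    exact ⟨le_trans (hbd i (le_of_lt hi)).1 hx.1, le_trans hx.2 (hbd (i+1) hi).2⟩
  rw [← hp0, ← hpn, ← partition_sum_integral g hg n p, ← Finset.sum_sub_distrib]
  have key : ∀ i < n,
      ‖(p (i + 1) - p i) • g (t i) - ∫ x in (p i)..(p (i+1)), g x‖ ≤ ε' * (p (i+1) - p i) := by
    intro i hi
    have h1 : (p (i + 1) - p i) • g (t i) = ∫ _ in (p i)..(p (i+1)), g (t i) := by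
      rw [integral_const]
    rw [h1, ← integral_sub (intervalIntegrable_const) (hg.intervalIntegrable _ _)]
    have := norm_integral_le_of_norm_le_const (a := p i) (b := p (i+1)) (C := ε')
      (f := fun x => g (t i) - g x) ?_
    · calc _ ≤ ε' * |p (i+1) - p i| := this
        _ = ε' * (p (i+1) - p i) := by
            rw [abs_of_nonneg]; linarith [hinc i hi]
    · intro x hx
      have hx' : x ∈ Set.Icc (p i) (p (i+1)) := by
        rw [Set.uIoc_of_le (le_of_lt (hinc i hi))] at hx
        exact ⟨le_of_lt hx.1, hx.2⟩
      have hti := ht i hi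
      have hd : dist (t i) x < δ := by
        rw [Real.dist_eq, abs_lt]
        constructor <;> [linarith [hti.1, hx'.2, hmesh i hi]; linarith [hti.2, hx'.1, hmesh i hi]]
      have := hδ' (t i) (hIcc i hi hti) x (hIcc i hi hx') hd
      rw [dist_eq_norm] at this
      exact le_of_lt this
  calc ‖∑ i ∈ Finset.range n, ((p (i + 1) - p i) • g (t i) - ∫ x in (p i)..(p (i+1)), g x)‖
      ≤ ∑ i ∈ Finset.range n, ε' * (p (i+1) - p i) :=
        norm_sum_le_of_le _ (fun i hi => key i (Finset.mem_range.1 hi))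
    _ = ε' * (p n - p 0) := by rw [← Finset.mul_sum, Finset.sum_range_sub]
    _ = ε' * (b - a) := by rw [hp0, hpn]
    _ = ε / 2 := by rw [hε'def]; rw [div_mul_eq_mul_div, div_eq_div_iff (by linarith) (by norm_num : (2:ℝ) ≠ 0)]; ring
    _ < ε := by linarith

lemma exists_fine_partition (a b δ : ℝ) (hab : a < b) (hδ : 0 < δ) :
    ∃ (n : ℕ) (p : ℕ → ℝ), p 0 = a ∧ p n = b ∧ (∀ i < n, p i < p (i + 1)) ∧
      (∀ i < n, p (i + 1) - p i < δ) ∧ (∀ i < n, p i ∈ Set.Icc (p i) (p (i + 1))) := by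
  obtain ⟨n, hn⟩ := exists_nat_gt ((b - a) / δ)
  have hn0 : 0 < (n : ℝ) := lt_of_le_of_lt (le_of_lt (div_pos (by linarith) hδ)) hn
  set p : ℕ → ℝ := fun i => a + i * ((b - a) / n) with hp
  have hstep : ∀ i : ℕ, p (i + 1) - p i = (b - a) / n := by
    intro i; simp only [hp]; push_cast; ring
  have hpos : 0 < (b - a) / n := div_pos (by linarith) hn0
  have hinc : ∀ i < n, p i < p (i + 1) := fun i _ =>
    sub_pos.1 (by rw [hstep i]; exact hpos)
  refine ⟨n, p, by simp [hp], by simp only [hp]; field_simp; ring, hinc, fun i _ => ?_,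
    fun i hi => ⟨le_rfl, le_of_lt (hinc i hi)⟩⟩
  rw [hstep i]
  rw [div_lt_iff₀ hn0]
  calc b - a = ((b - a) / δ) * δ := by field_simp
    _ < n * δ := mul_lt_mul_of_pos_right hn hδ
    _ = δ * n := mul_comm _ _

lemma hasRiemannIntegral_unique {g : ℝ → E} {a b : ℝ} (hab : a < b) {y y' : E}
    (h1 : HasRiemannIntegral g a b y) (h2 : HasRiemannIntegral g a b y') : y = y' := by
  by_contra hne
  have hd : 0 < ‖y - y'‖ := by
    rw [norm_pos_iff]; exact sub_ne_zero.2 hne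
  obtain ⟨δ1, hδ1, H1⟩ := h1 (‖y - y'‖ / 2) (by linarith)
  obtain ⟨δ2, hδ2, H2⟩ := h2 (‖y - y'‖ / 2) (by linarith)
  obtain ⟨n, p, hp0, hpn, hinc, hmesh, ht⟩ :=
    exists_fine_partition a b (min δ1 δ2) hab (lt_min hδ1 hδ2)
  have A := H1 n p p hp0 hpn hinc (fun i hi => lt_of_lt_of_le (hmesh i hi) (min_le_left _ _)) ht
  have B := H2 n p p hp0 hpn hinc (fun i hi => lt_of_lt_of_le (hmesh i hi) (min_le_right _ _)) ht
  set s := ∑ i ∈ Finset.range n, (p (i + 1) - p i) • g (p i) with hs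
  have tri : ‖y - y'‖ ≤ ‖s - y'‖ + ‖s - y‖ := by
    have he : y - y' = (s - y') - (s - y) := by abel
    rw [he]
    exact norm_sub_le _ _
  linarith

end Core

lemma hasRiemann_coe {B : Type*} [NormedAddCommGroup B] [NormedSpace ℝ B] {S : Submodule ℝ B}
    (f : ℝ → S) (a b : ℝ) (y : S) :
    HasRiemannIntegral f a b y ↔ HasRiemannIntegral (fun x => (f x : B)) a b (y : B) := by
  have key : ∀ (n : ℕ) (p t : ℕ → ℝ),
      ‖(∑ i ∈ Finset.range n, (p (i + 1) - p i) • f (t i)) - y‖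
      = ‖(∑ i ∈ Finset.range n, (p (i + 1) - p i) • ((f (t i) : B))) - (y : B)‖ := by
    intro n p t
    calc ‖(∑ i ∈ Finset.range n, (p (i + 1) - p i) • f (t i)) - y‖
        = ‖(((∑ i ∈ Finset.range n, (p (i + 1) - p i) • f (t i)) - y : S) : B)‖ := rfl
      _ = ‖(∑ i ∈ Finset.range n, (p (i + 1) - p i) • ((f (t i) : B))) - (y : B)‖ := by
          push_cast
          rfl
  constructor <;> intro h ε hε <;> obtain ⟨δ, hδ, H⟩ := h ε hε <;>
    refine ⟨δ, hδ, fun n p t h1 h2 h3 h4 h5 => ?_⟩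
  · rw [← key]; exact H n p t h1 h2 h3 h4 h5
  · rw [key]; exact H n p t h1 h2 h3 h4 h5

noncomputable section

abbrev BB := C(Set.Icc (0:ℝ) 1, ℝ)

def mon (n : ℕ) : BB :=
  ⟨fun t => (t : ℝ)^n / n.factorial, by fun_prop⟩

def aa (n : ℕ) : ℝ := ((2:ℝ)^(n+1))⁻¹
def bb (n : ℕ) : ℝ := ((2:ℝ)^n)⁻¹

def bump (n : ℕ) (x : ℝ) : ℝ := max 0 ((x - aa n) * (bb n - x))

def cc (n : ℕ) : ℝ := 6 * 2^(3*(n+1))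

def phi (n : ℕ) (x : ℝ) : ℝ := cc n * (bump n x - bump n (-x))

def F (x : ℝ) : BB := ∑' n, phi n x • mon n

def uu (n : ℕ) : ℝ := 3 * 2^n * (1 / n.factorial)

lemma aa_pos (n : ℕ) : 0 < aa n := by rw [aa]; positivity
lemma bb_pos (n : ℕ) : 0 < bb n := by rw [bb]; positivity
lemma aa_lt_bb (n : ℕ) : aa n < bb n := by
  rw [aa, bb]
  apply inv_strictAnti₀ (by positivity)
  rw [pow_succ]
  nlinarith [pow_pos (by norm_num : (0:ℝ) < 2) n]
lemma bb_le_one (n : ℕ) : bb n ≤ 1 := by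
  rw [bb, inv_le_one_iff₀]
  right
  exact one_le_pow₀ (by norm_num)

lemma bb_sub_aa (n : ℕ) : bb n - aa n = aa n := by
  rw [bb, aa, pow_succ]
  have : (2:ℝ)^n ≠ 0 := by positivity
  field_simp
  ring

lemma bump_nonneg (n : ℕ) (x : ℝ) : 0 ≤ bump n x := le_max_left _ _

lemma bump_le (n : ℕ) (x : ℝ) : bump n x ≤ (aa n / 2)^2 := by
  apply max_le (by positivity)
  have hb : bb n = 2 * aa n := by linarith [bb_sub_aa n]
  rw [hb]
  nlinarith [sq_nonneg (2*x - 3*aa n)]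

lemma bump_eq_zero_of_le (n : ℕ) (x : ℝ) (h : x ≤ aa n) : bump n x = 0 := by
  apply max_eq_left
  have := aa_lt_bb n
  nlinarith

lemma bump_eq_zero_of_ge (n : ℕ) (x : ℝ) (h : bb n ≤ x) : bump n x = 0 := by
  apply max_eq_left
  have := aa_lt_bb n
  nlinarith

lemma phi_bound (n : ℕ) (x : ℝ) : |phi n x| ≤ 3 * 2^n := by
  rw [phi, abs_mul, abs_of_nonneg (by rw [cc]; positivity : (0:ℝ) ≤ cc n)]
  have h1 := bump_nonneg n x
  have h2 := bump_nonneg n (-x)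
  have h3 := bump_le n x
  have h4 := bump_le n (-x)
  have h5 : |bump n x - bump n (-x)| ≤ (aa n / 2)^2 := abs_le.2 ⟨by linarith, by linarith⟩
  calc cc n * |bump n x - bump n (-x)| ≤ cc n * (aa n / 2)^2 :=
        mul_le_mul_of_nonneg_left h5 (by rw [cc]; positivity)
    _ = 3 * 2^n := by
        rw [cc, aa]
        have h6 : (2:ℝ)^(3*(n+1)) = ((2:ℝ)^(n+1))^3 := by rw [← pow_mul, Nat.mul_comm]
        have h7 : (2:ℝ)^(n+1) ≠ 0 := by positivity
        rw [h6, pow_succ]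
        field_simp
        ring

lemma mon_norm (n : ℕ) : ‖mon n‖ ≤ 1 / n.factorial := by
  rw [ContinuousMap.norm_le _ (by positivity)]
  rintro ⟨t, ht0, ht1⟩
  simp only [mon, ContinuousMap.coe_mk]
  rw [Real.norm_eq_abs, abs_div, abs_of_nonneg (pow_nonneg ht0 n),
    abs_of_nonneg (by positivity : (0:ℝ) ≤ (n.factorial : ℝ))]
  have h1 : (0:ℝ) < n.factorial := Nat.cast_pos.2 n.factorial_pos
  exact (div_le_div_iff_of_pos_right h1).2 (pow_le_one₀ ht0 ht1)

lemma term_bound (n : ℕ) (x : ℝ) : ‖phi n x • mon n‖ ≤ uu n := by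
  calc ‖phi n x • mon n‖ = ‖phi n x‖ * ‖mon n‖ := norm_smul (β := BB) (phi n x) (mon n)
    _ ≤ (3 * 2^n) * (1 / n.factorial) :=
        mul_le_mul (by simpa using phi_bound n x) (mon_norm n) (norm_nonneg _) (by positivity)
    _ = uu n := rfl

lemma uu_summable : Summable uu := by
  have := (Real.summable_pow_div_factorial 2).mul_left 3
  apply this.congr
  intro n
  rw [uu]
  ring

lemma phi_continuous (n : ℕ) : Continuous (phi n) := by
  unfold phi bump
  fun_prop

lemma F_continuous : Continuous F :=
  continuous_tsum (fun n => (phi_continuous n).smul continuous_const) uu_summable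
    (fun n x => term_bound n x)

lemma term_summable (x : ℝ) : Summable (fun n => phi n x • mon n) :=
  Summable.of_norm (Summable.of_nonneg_of_le (fun _ => norm_nonneg _)
    (fun n => term_bound n x) uu_summable)

lemma phi_zero (n : ℕ) : phi n 0 = 0 := by simp [phi]

lemma phi_eq_zero_of_abs_ge (n : ℕ) (x : ℝ) (h : bb n ≤ |x|) : phi n x = 0 := by
  rcases abs_cases x with ⟨he, _⟩ | ⟨he, _⟩
  · rw [phi, bump_eq_zero_of_ge n x (he ▸ h),
      bump_eq_zero_of_le n (-x) (by
        have := bb_pos n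
        have := aa_pos n
        linarith [he ▸ h])]
    ring
  · rw [phi, bump_eq_zero_of_le n x (by
        have := bb_pos n
        have := aa_pos n
        linarith [he ▸ h]),
      bump_eq_zero_of_ge n (-x) (by linarith [he ▸ h])]
    ring

lemma mon_mem (n : ℕ) : mon n ∈ polySubmodule := by
  refine ⟨Polynomial.C ((n.factorial : ℝ))⁻¹ * Polynomial.X ^ n, fun t => ?_⟩
  simp [mon, div_eq_inv_mul]

lemma F_mem (x : ℝ) : F x ∈ polySubmodule := by
  by_cases hx : x = 0
  · subst hx
    have : F 0 = 0 := by
      rw [F]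
      convert tsum_zero with n
      rw [phi_zero, zero_smul]
    rw [this]
    exact polySubmodule.zero_mem
  · obtain ⟨N, hN⟩ := pow_unbounded_of_one_lt |x|⁻¹ (by norm_num : (1:ℝ) < 2)
    have hzero : ∀ n ∉ Finset.range N, phi n x • mon n = 0 := by
      intro n hn
      rw [Finset.mem_range, not_lt] at hn
      have h1 : bb n ≤ |x| := by
        rw [bb]
        rw [inv_le_comm₀ (by positivity) (abs_pos.2 hx)]
        calc |x|⁻¹ ≤ 2^N := le_of_lt hN
          _ ≤ 2^n := pow_le_pow_right₀ (by norm_num) hn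
      rw [phi_eq_zero_of_abs_ge n x h1, zero_smul]
    rw [F, tsum_eq_sum hzero]
    exact Submodule.sum_mem _ (fun n _ => Submodule.smul_mem _ _ (mon_mem n))

lemma F_odd (x : ℝ) : F (-x) = - F x := by
  rw [F, F, ← tsum_neg]
  congr 1
  funext n
  have : phi n (-x) = - phi n x := by rw [phi, phi, neg_neg]; ring
  rw [this, neg_smul]

def expB : BB := ⟨fun t => Real.exp t, by fun_prop⟩

lemma mon_summable : Summable mon := by
  apply Summable.of_norm
  apply Summable.of_nonneg_of_le (fun _ => norm_nonneg _) (fun n => mon_norm n)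
  have := Real.summable_pow_div_factorial 1
  apply this.congr
  intro n
  rw [one_pow]

lemma hasSum_mon : HasSum mon expB := by
  have hs := mon_summable
  have h1 := hs.hasSum
  suffices h : ∑' n, mon n = expB by rwa [h] at h1
  ext t
  have h2 : (∑' n, mon n) t = ∑' n, (mon n) t := by
    have := (ContinuousMap.evalCLM ℝ t).map_tsum hs
    simpa using this
  rw [h2]
  have h3 : ∀ n, (mon n) t = (t:ℝ)^n / n.factorial := fun n => rfl
  simp only [h3]
  have h4 : Real.exp (t:ℝ) = ∑' n, (t:ℝ)^n / n.factorial := by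
    rw [Real.exp_eq_exp_ℝ, NormedSpace.exp_eq_tsum_div]
  rw [← h4]
  rfl

lemma integral_parabola (a b : ℝ) :
    ∫ x in a..b, (x - a) * (b - x) = (b - a)^3 / 6 := by
  have hd : ∀ x : ℝ, HasDerivAt (fun y => (-(1:ℝ)/3)*y^3 + ((a+b)/2)*y^2 + (-(a*b))*y)
      ((x - a) * (b - x)) x := by
    intro x
    have h := (((hasDerivAt_pow 3 x).const_mul (-(1:ℝ)/3)).add
      ((hasDerivAt_pow 2 x).const_mul ((a+b)/2))).add ((hasDerivAt_id x).const_mul (-(a*b)))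
    refine h.congr_deriv ?_
    push_cast
    ring
  rw [integral_eq_sub_of_hasDerivAt (fun x _ => hd x)
    (Continuous.intervalIntegrable (by fun_prop) a b)]
  ring

lemma bump_continuous (n : ℕ) : Continuous (bump n) := by
  unfold bump; fun_prop

lemma bump_integral (n : ℕ) : ∫ x in (0:ℝ)..1, bump n x = (aa n)^3 / 6 := by
  have h0a : ∫ x in (0:ℝ)..(aa n), bump n x = 0 := by
    rw [integral_congr (g := fun _ => (0:ℝ)) ?_, integral_const, smul_zero]
    intro x hx
    rw [Set.uIcc_of_le (le_of_lt (aa_pos n))] at hx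
    exact bump_eq_zero_of_le n x hx.2
  have hb1 : ∫ x in (bb n)..1, bump n x = 0 := by
    rw [integral_congr (g := fun _ => (0:ℝ)) ?_, integral_const, smul_zero]
    intro x hx
    rw [Set.uIcc_of_le (bb_le_one n)] at hx
    exact bump_eq_zero_of_ge n x hx.1
  have hab : ∫ x in (aa n)..(bb n), bump n x = (aa n)^3/6 := by
    rw [integral_congr (g := fun x => (x - aa n) * (bb n - x)) ?_, integral_parabola,
      bb_sub_aa n]
    intro x hx
    rw [Set.uIcc_of_le (le_of_lt (aa_lt_bb n))] at hx
    exact max_eq_right (mul_nonneg (by linarith [hx.1]) (by linarith [hx.2]))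
  have h1 : ∫ x in (0:ℝ)..(bb n), bump n x = (aa n)^3/6 := by
    rw [← integral_add_adjacent_intervals ((bump_continuous n).intervalIntegrable 0 (aa n))
      ((bump_continuous n).intervalIntegrable (aa n) (bb n)), h0a, hab, zero_add]
  rw [← integral_add_adjacent_intervals ((bump_continuous n).intervalIntegrable 0 (bb n))
      ((bump_continuous n).intervalIntegrable (bb n) 1), h1, hb1, add_zero]

lemma phi_integral (n : ℕ) : ∫ x in (0:ℝ)..1, phi n x = 1 := by
  have hcong : ∫ x in (0:ℝ)..1, phi n x = ∫ x in (0:ℝ)..1, cc n * bump n x := by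
    apply integral_congr
    intro x hx
    rw [Set.uIcc_of_le (by norm_num : (0:ℝ) ≤ 1)] at hx
    rw [phi, bump_eq_zero_of_le n (-x) (by linarith [aa_pos n, hx.1]), sub_zero]
  rw [hcong, integral_const_mul, bump_integral, cc, aa]
  have h6 : (2:ℝ)^(3*(n+1)) = ((2:ℝ)^(n+1))^3 := by rw [← pow_mul, Nat.mul_comm]
  have h7 : (2:ℝ)^(n+1) ≠ 0 := by positivity
  rw [h6]
  field_simp

lemma SN_integrable (N : ℕ) (a b : ℝ) :
    IntervalIntegrable (fun x => ∑ n ∈ Finset.range N, phi n x • mon n)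
      MeasureTheory.volume a b :=
  Continuous.intervalIntegrable
    (continuous_finset_sum _ fun n _ => (phi_continuous n).smul continuous_const) a b

lemma SN_integral (N : ℕ) (a b : ℝ) :
    (∫ x in a..b, ∑ n ∈ Finset.range N, phi n x • mon n) =
      ∑ n ∈ Finset.range N, (∫ x in a..b, phi n x) • mon n := by
  rw [integral_finset_sum (f := fun n x => phi n x • mon n)
    (fun n _ => ((phi_continuous n).smul continuous_const).intervalIntegrable a b)]
  exact Finset.sum_congr rfl fun n _ => integral_smul_const _ _

set_option maxHeartbeats 1000000 in
lemma F_tail (N : ℕ) (x : ℝ) :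
    ‖F x - ∑ n ∈ Finset.range N, phi n x • mon n‖ ≤ ∑' k, uu (k + N) := by
  have hs := term_summable x
  have h1 := Summable.sum_add_tsum_nat_add (f := fun n => phi n x • mon n) N hs
  have h2 : F x - ∑ n ∈ Finset.range N, phi n x • mon n
      = ∑' k, phi (k + N) x • mon (k + N) := by
    rw [F, ← h1, add_sub_cancel_left]
  rw [h2]
  have hnorm : Summable fun n => ‖phi n x • mon n‖ :=
    Summable.of_nonneg_of_le (fun _ => norm_nonneg _) (fun n => term_bound n x) uu_summable
  calc ‖∑' k, phi (k + N) x • mon (k + N)‖ ≤ ∑' k, ‖phi (k + N) x • mon (k + N)‖ :=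
        norm_tsum_le_tsum_norm ((summable_nat_add_iff N).2 hnorm)
    _ ≤ ∑' k, uu (k + N) :=
        Summable.tsum_le_tsum (fun k => term_bound (k + N) x) ((summable_nat_add_iff N).2 hnorm)
          ((summable_nat_add_iff N).2 uu_summable)

lemma F_integral_tendsto (a b : ℝ) :
    Tendsto (fun N => ∑ n ∈ Finset.range N, (∫ x in a..b, phi n x) • mon n) atTop
      (𝓝 (∫ x in a..b, F x)) := by
  rw [tendsto_iff_norm_sub_tendsto_zero]
  apply squeeze_zero (fun N => norm_nonneg _)
    (g := fun N => (∑' k, uu (k + N)) * |b - a|)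
  · intro N
    rw [← SN_integral,
      ← integral_sub (SN_integrable N a b) (F_continuous.intervalIntegrable a b)]
    apply norm_integral_le_of_norm_le_const
    intro x _
    rw [norm_sub_rev]
    exact F_tail N x
  · have h1 := tendsto_sum_nat_add uu
    simpa using h1.mul_const |b - a|

lemma F01 : (∫ x in (0:ℝ)..1, F x) = expB := by
  have h2 : Tendsto (fun N => ∑ n ∈ Finset.range N, (∫ x in (0:ℝ)..1, phi n x) • mon n) atTop
      (𝓝 expB) := by
    have : (fun N => ∑ n ∈ Finset.range N, (∫ x in (0:ℝ)..1, phi n x) • mon n)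
        = fun N => ∑ n ∈ Finset.range N, mon n := by
      funext N
      exact Finset.sum_congr rfl fun n _ => by rw [phi_integral, one_smul]
    rw [this]
    exact hasSum_mon.tendsto_sum_nat
  exact tendsto_nhds_unique (F_integral_tendsto 0 1) h2

lemma Fneg : (∫ x in (-1:ℝ)..0, F x) = -expB := by
  have h1 : (∫ x in (0:ℝ)..1, F (-x)) = ∫ x in (-1:ℝ)..0, F x := by
    rw [integral_comp_neg]
    norm_num
  rw [← h1]
  have h2 : (∫ x in (0:ℝ)..1, F (-x)) = ∫ x in (0:ℝ)..1, -F x := by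
    apply integral_congr
    intro x _
    exact F_odd x
  rw [h2, integral_neg, F01]

lemma F11 : (∫ x in (-1:ℝ)..1, F x) = 0 := by
  rw [← integral_add_adjacent_intervals (F_continuous.intervalIntegrable (-1) 0)
    (F_continuous.intervalIntegrable 0 1), Fneg, F01]
  abel

lemma iteratedDeriv_exp (n : ℕ) : iteratedDeriv n Real.exp = Real.exp := by
  induction n with
  | zero => rfl
  | succ n ih => rw [iteratedDeriv_succ, ih, Real.deriv_exp]

lemma iteratedDeriv_polyeval (p : Polynomial ℝ) (n : ℕ) :
    iteratedDeriv n (fun x => p.eval x) = fun x => (Polynomial.derivative^[n] p).eval x := by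
  induction n generalizing p with
  | zero => simp
  | succ n ih =>
      rw [iteratedDeriv_succ', Function.iterate_succ_apply]
      have hd : (deriv fun x => p.eval x) = fun x => p.derivative.eval x :=
        funext fun x => Polynomial.deriv p
      rw [hd]
      exact ih p.derivative

lemma exp_ne_poly (p : Polynomial ℝ) :
    ¬ ∀ x ∈ Set.Ioo (0:ℝ) 1, Real.exp x = p.eval x := by
  intro h
  have hmem : Set.Ioo (0:ℝ) 1 ∈ 𝓝 (1/2 : ℝ) :=
    Ioo_mem_nhds (by norm_num) (by norm_num)
  have hev : Real.exp =ᶠ[𝓝 (1/2 : ℝ)] fun x => p.eval x := by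
    filter_upwards [hmem] with x hx using h x hx
  have key : ∀ n, iteratedDeriv n Real.exp =ᶠ[𝓝 (1/2 : ℝ)]
      iteratedDeriv n (fun x => p.eval x) := by
    intro n
    induction n with
    | zero => simpa [iteratedDeriv_zero] using hev
    | succ n ih => rw [iteratedDeriv_succ, iteratedDeriv_succ]; exact ih.deriv
  have h1 := (key (p.natDegree + 1)).eq_of_nhds
  rw [iteratedDeriv_exp, iteratedDeriv_polyeval,
    Polynomial.iterate_derivative_eq_zero (Nat.lt_succ_self _)] at h1
  simp only [Polynomial.eval_zero] at h1
  exact Real.exp_ne_zero _ h1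

end

/-- There is a continuous function from `[-1,1]` into the space `E` of polynomial
functions on `[0,1]` (sup norm) which is integrable on `[-1,1]` with integral `0`,
but integrable neither on `[0,1]` nor on `[-1,0]`: Chasles' property fails. -/
theorem chasles_fails_for_polynomials :
    ∃ f : ℝ → polySubmodule,
      ContinuousOn f (Set.Icc (-1) 1) ∧
      HasRiemannIntegral f (-1) 1 0 ∧
      (¬ ∃ y, HasRiemannIntegral f 0 1 y) ∧
      (¬ ∃ y, HasRiemannIntegral f (-1) 0 y) := by
  classical
  refine ⟨fun x => ⟨F x, F_mem x⟩, ?_, ?_, ?_, ?_⟩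
  · exact (Continuous.subtype_mk F_continuous F_mem).continuousOn
  · rw [hasRiemann_coe]
    have h := hasRiemannIntegral_of_continuous F F_continuous (-1) 1 (by norm_num)
    rw [F11] at h
    exact h
  · rintro ⟨y, hy⟩
    rw [hasRiemann_coe] at hy
    have hy' : HasRiemannIntegral F 0 1 (y : BB) := hy
    have h2 := hasRiemannIntegral_of_continuous F F_continuous 0 1 (by norm_num)
    rw [F01] at h2
    have h3 : (y : BB) = expB := hasRiemannIntegral_unique (by norm_num) hy' h2
    obtain ⟨p, hp⟩ := y.2
    apply exp_ne_poly p
    intro x hx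
    have hx' : x ∈ Set.Icc (0:ℝ) 1 := ⟨le_of_lt hx.1, le_of_lt hx.2⟩
    have h4 := hp ⟨x, hx'⟩
    rw [h3] at h4
    exact h4
  · rintro ⟨y, hy⟩
    rw [hasRiemann_coe] at hy
    have hy' : HasRiemannIntegral F (-1) 0 (y : BB) := hy
    have h2 := hasRiemannIntegral_of_continuous F F_continuous (-1) 0 (by norm_num)
    rw [Fneg] at h2
    have h3 : (y : BB) = -expB := hasRiemannIntegral_unique (by norm_num) hy' h2
    have h3' : ((-y : polySubmodule) : BB) = expB := by
      push_cast
      rw [h3]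
      ring
    obtain ⟨p, hp⟩ := (-y).2
    apply exp_ne_poly p
    intro x hx
    have hx' : x ∈ Set.Icc (0:ℝ) 1 := ⟨le_of_lt hx.1, le_of_lt hx.2⟩
    have h4 := hp ⟨x, hx'⟩
    rw [h3'] at h4
    exact h4
end

section
/- If E is a complete real normed vector space, then every continuous function f : [a,b] → E is Riemann (hence Bochner) integrable on [a,b]; if E is not complete, there exists a continuous f : [0,1] → E which is not integrable on [0,1]. Thus 'continuous on a segment implies integrable on that segment' holds for E-valued functions if and only if E is complete. -/
open Filter Topology

set_option linter.dupNamespace false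

namespace RiemannAux

theorem part1 {E : Type*} [NormedAddCommGroup E] [NormedSpace ℝ E] [CompleteSpace E]
    (a b : ℝ) (f : ℝ → E) (hab : a ≤ b) (hf : ContinuousOn f (Set.Icc a b)) :
    ∃ y, HasRiemannIntegral f a b y := by
  refine ⟨∫ x in a..b, f x, ?_⟩
  intro ε hε
  have hba : (0:ℝ) < b - a + 1 := by linarith
  set ε' : ℝ := ε / (b - a + 1) with hε'def
  have hε' : 0 < ε' := div_pos hε hba
  have huc : UniformContinuousOn f (Set.Icc a b) :=
    (isCompact_Icc).uniformContinuousOn_of_continuous hf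
  obtain ⟨δ, hδ, hδf⟩ := (Metric.uniformContinuousOn_iff).mp huc ε' hε'
  refine ⟨δ, hδ, ?_⟩
  intro n p t hp0 hpn hmono hmesh htags
  -- p is monotone up to n
  have hmono' : ∀ i j, i ≤ j → j ≤ n → p i ≤ p j := by
    intro i j hij hjn
    induction j with
    | zero => simp_all
    | succ j ih =>
      rcases Nat.lt_or_ge i (j+1) with h | h
      · have : p i ≤ p j := ih (Nat.lt_succ_iff.mp h) (le_of_lt (Nat.lt_of_succ_le hjn))
        exact this.trans (le_of_lt (hmono j (Nat.lt_of_succ_le hjn)))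
      · have : i = j + 1 := le_antisymm hij h
        simp [this]
  have hmem : ∀ i ≤ n, p i ∈ Set.Icc a b := by
    intro i hi
    constructor
    · rw [← hp0]; exact hmono' 0 i (Nat.zero_le _) hi
    · rw [← hpn]; exact hmono' i n hi le_rfl
  have hint : ∀ i < n, IntervalIntegrable f MeasureTheory.volume (p i) (p (i+1)) := by
    intro i hi
    apply ContinuousOn.intervalIntegrable
    apply hf.mono
    rw [Set.uIcc_of_le (le_of_lt (hmono i hi))]
    exact Set.Icc_subset_Icc (hmem i hi.le).1 (hmem (i+1) hi).2
  have hsplit : ∑ i ∈ Finset.range n, ∫ x in (p i)..(p (i+1)), f x = ∫ x in a..b, f x := by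
    rw [intervalIntegral.sum_integral_adjacent_intervals hint, hp0, hpn]
  rw [← hsplit, ← Finset.sum_sub_distrib]
  have hterm : ∀ i ∈ Finset.range n,
      ‖(p (i+1) - p i) • f (t i) - ∫ x in (p i)..(p (i+1)), f x‖ ≤ ε' * (p (i+1) - p i) := by
    intro i hi
    rw [Finset.mem_range] at hi
    have hle : p i ≤ p (i+1) := (hmono i hi).le
    have h1 : (p (i+1) - p i) • f (t i) = ∫ _x in (p i)..(p (i+1)), f (t i) :=
      (intervalIntegral.integral_const _).symm
    rw [h1, ← intervalIntegral.integral_sub (intervalIntegrable_const) (hint i hi)]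
    have hb : ‖∫ x in (p i)..(p (i+1)), (f (t i) - f x)‖ ≤ ε' * |p (i+1) - p i| := by
      apply intervalIntegral.norm_integral_le_of_norm_le_const
      intro x hx
      rw [Set.uIoc_of_le hle] at hx
      have hxI : x ∈ Set.Icc a b := ⟨le_trans (hmem i hi.le).1 hx.1.le, le_trans hx.2 (hmem (i+1) hi).2⟩
      have htI : t i ∈ Set.Icc a b := by
        have := htags i hi
        exact ⟨le_trans (hmem i hi.le).1 this.1, le_trans this.2 (hmem (i+1) hi).2⟩
      have hdist : dist (t i) x < δ := by
        have h2 := htags i hi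
        rw [Real.dist_eq]
        have := hmesh i hi
        rw [abs_lt]
        obtain ⟨h2a, h2b⟩ := h2
        obtain ⟨hxa, hxb⟩ := hx
        constructor <;> nlinarith
      have := hδf (t i) htI x hxI hdist
      rw [dist_eq_norm] at this
      exact this.le
    rwa [abs_of_nonneg (by linarith)] at hb
  calc ‖∑ i ∈ Finset.range n, ((p (i+1) - p i) • f (t i) - ∫ x in (p i)..(p (i+1)), f x)‖
      ≤ ∑ i ∈ Finset.range n, ε' * (p (i+1) - p i) := norm_sum_le_of_le _ hterm
    _ = ε' * (b - a) := by
        rw [← Finset.mul_sum, Finset.sum_range_sub p n, hp0, hpn]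
    _ < ε := by
        rw [hε'def, div_mul_eq_mul_div, div_lt_iff₀ hba]
        nlinarith



noncomputable def al (k : ℕ) : ℝ := 1 - (1/2)^k

noncomputable def md (k : ℕ) : ℝ := al k + (1/2)^(k+2)

noncomputable def gb (k : ℕ) (x : ℝ) : ℝ := 2^(k+2) * max 0 (1 - 2^(k+2) * |x - md k|)

lemma al_zero : al 0 = 0 := by simp [al]

lemma al_lt_one (k : ℕ) : al k < 1 := by
  have : (0:ℝ) < (1/2)^k := by positivity
  simp only [al]; linarith

lemma al_succ (k : ℕ) : al (k+1) = al k + (1/2)^(k+1) := by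
  simp only [al, pow_succ]; ring

lemma al_mono : Monotone al := by
  apply monotone_nat_of_le_succ
  intro k; rw [al_succ]
  have : (0:ℝ) < (1/2)^(k+1) := by positivity
  linarith

lemma al_lt_succ (k : ℕ) : al k < al (k+1) := by
  rw [al_succ]; have : (0:ℝ) < (1/2)^(k+1) := by positivity
  linarith

lemma gb_nonneg (k : ℕ) (x : ℝ) : 0 ≤ gb k x := by
  unfold gb; positivity

lemma gb_le (k : ℕ) (x : ℝ) : gb k x ≤ 2^(k+2) := by
  unfold gb
  have h1 : max 0 (1 - 2^(k+2) * |x - md k|) ≤ 1 := by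
    apply max_le (by norm_num)
    have : (0:ℝ) ≤ 2^(k+2) * |x - md k| := by positivity
    linarith
  calc (2:ℝ)^(k+2) * max 0 (1 - 2^(k+2) * |x - md k|) ≤ 2^(k+2) * 1 := by
        apply mul_le_mul_of_nonneg_left h1 (by positivity)
    _ = 2^(k+2) := mul_one _

lemma two_pow_half_pow (n : ℕ) : (2:ℝ)^n * (1/2)^n = 1 := by
  rw [← mul_pow]; norm_num

lemma gb_eq_zero {k : ℕ} {x : ℝ} (h : x ≤ al k ∨ al (k+1) ≤ x) : gb k x = 0 := by
  unfold gb
  have hmd : |x - md k| ≥ (1/2)^(k+2) := by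
    have h1 : md k - al k = (1/2)^(k+2) := by simp [md]
    have h2 : al (k+1) - md k = (1/2)^(k+2) := by
      rw [al_succ]; simp only [md, pow_succ]; ring
    have hp : (0:ℝ) < (1/2)^(k+2) := by positivity
    rcases h with h | h
    · rw [abs_sub_comm, abs_of_nonneg (by linarith)]; linarith
    · rw [abs_of_nonneg (by linarith)]; linarith
  have : 1 - 2^(k+2) * |x - md k| ≤ 0 := by
    have := mul_le_mul_of_nonneg_left hmd (show (0:ℝ) ≤ 2^(k+2) by positivity)
    have h4 := two_pow_half_pow (k+2)
    linarith
  rw [max_eq_left this, mul_zero]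

lemma gb_continuous (k : ℕ) : Continuous (gb k) := by
  unfold gb
  exact continuous_const.mul (continuous_const.max
    (continuous_const.sub (continuous_const.mul ((continuous_id.sub continuous_const).abs))))


section F
variable {E : Type*} [NormedAddCommGroup E] [NormedSpace ℝ E]

noncomputable def F (v : ℕ → E) (x : ℝ) : E := ∑' k, gb k x • v k

variable {v : ℕ → E}

lemma F_eq_sum {x : ℝ} {N : ℕ} (h : x ≤ al N) : F v x = ∑ k ∈ Finset.range N, gb k x • v k := by
  apply tsum_eq_sum
  intro k hk
  rw [Finset.mem_range, not_lt] at hk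
  rw [gb_eq_zero (Or.inl (h.trans (al_mono hk))), zero_smul]

lemma F_one : F v 1 = 0 := by
  have h : F v 1 = ∑ k ∈ (∅ : Finset ℕ), gb k (1:ℝ) • v k := by
    apply tsum_eq_sum
    intro k _
    rw [gb_eq_zero (Or.inr (al_lt_one (k+1)).le), zero_smul]
  simpa using h

lemma exists_al_gt {x : ℝ} (hx : x < 1) (M : ℕ) : ∃ N, M ≤ N ∧ x < al N := by
  obtain ⟨N₀, hN₀⟩ := exists_pow_lt_of_lt_one (show (0:ℝ) < 1 - x by linarith)
    (show (1:ℝ)/2 < 1 by norm_num)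
  refine ⟨max M N₀, le_max_left _ _, ?_⟩
  have h1 : (1/2:ℝ)^(max M N₀) ≤ (1/2)^N₀ :=
    pow_le_pow_of_le_one (by norm_num) (by norm_num) (le_max_right _ _)
  simp only [al]; linarith

lemma term_bound (hv : ∀ k, ‖v k‖ ≤ (1/4)^k) (k : ℕ) (x : ℝ) :
    ‖gb k x • v k‖ ≤ 4 * (1/2)^k := by
  rw [norm_smul, Real.norm_eq_abs, abs_of_nonneg (gb_nonneg k x)]
  have h1 : gb k x * ‖v k‖ ≤ 2^(k+2) * (1/4)^k :=
    mul_le_mul (gb_le k x) (hv k) (norm_nonneg _) (by positivity)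
  have h2 : (2:ℝ)^(k+2) * (1/4)^k = 4 * (1/2)^k := by
    rw [pow_add, mul_comm ((2:ℝ)^k), mul_assoc, ← mul_pow]; norm_num
  linarith

lemma F_bound (hv : ∀ k, ‖v k‖ ≤ (1/4)^k) {x : ℝ} (M : ℕ) (h1 : al M ≤ x) (h2 : x ≤ 1) :
    ‖F v x‖ ≤ 8 * (1/2)^M := by
  rcases eq_or_lt_of_le h2 with rfl | hx
  · rw [F_one, norm_zero]; positivity
  obtain ⟨N, hMN, hN⟩ := exists_al_gt hx M
  rw [F_eq_sum hN.le]
  have hsub : Finset.Ico M N ⊆ Finset.range N := by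
    intro k hk; rw [Finset.mem_Ico] at hk; rw [Finset.mem_range]; omega
  have hzero : ∀ k ∈ Finset.range N, k ∉ Finset.Ico M N → gb k x • v k = 0 := by
    intro k hkr hk
    rw [Finset.mem_range] at hkr
    rw [Finset.mem_Ico, not_and_or, not_le, not_lt] at hk
    rcases hk with hk | hk
    · rw [gb_eq_zero (Or.inr ((al_mono hk).trans h1)), zero_smul]
    · omega
  rw [← Finset.sum_subset hsub hzero]
  calc ‖∑ k ∈ Finset.Ico M N, gb k x • v k‖ ≤ ∑ k ∈ Finset.Ico M N, 4 * (1/2:ℝ)^k :=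
        norm_sum_le_of_le _ (fun k _ => term_bound hv k x)
    _ = 4 * (1/2)^M * ∑ j ∈ Finset.range (N - M), (1/2:ℝ)^j := by
        rw [Finset.sum_Ico_eq_sum_range, Finset.mul_sum]
        apply Finset.sum_congr rfl
        intro j _
        rw [pow_add]; ring
    _ ≤ 8 * (1/2)^M := by
        have hS : ∑ j ∈ Finset.range (N - M), (1/2:ℝ)^j ≤ 2 := by
          simpa using sum_geometric_two_le (N - M)
        have h4 : (0:ℝ) < (1/2:ℝ)^M := by positivity
        nlinarith

lemma F_continuousOn (hv : ∀ k, ‖v k‖ ≤ (1/4)^k) : ContinuousOn (F v) (Set.Icc 0 1) := by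
  intro x hx
  rcases lt_or_eq_of_le hx.2 with hlt | heq
  · apply ContinuousAt.continuousWithinAt
    obtain ⟨N, _, hN⟩ := exists_al_gt hlt 0
    have hcont : ContinuousAt (fun y => ∑ k ∈ Finset.range N, gb k y • v k) x := by
      apply Continuous.continuousAt
      exact continuous_finset_sum _ (fun k _ => (gb_continuous k).smul continuous_const)
    apply hcont.congr
    filter_upwards [Iio_mem_nhds hN] with y hy
    exact (F_eq_sum (le_of_lt hy)).symm
  · subst heq
    rw [Metric.continuousWithinAt_iff]
    intro ε hε
    obtain ⟨M, hM⟩ := exists_pow_lt_of_lt_one (show (0:ℝ) < ε/8 by linarith)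
      (show (1:ℝ)/2 < 1 by norm_num)
    refine ⟨(1/2)^M, by positivity, ?_⟩
    intro y hy hdist
    rw [F_one, dist_eq_norm, sub_zero]
    have hy1 : al M ≤ y := by
      rw [Real.dist_eq, abs_lt] at hdist
      simp only [al]; linarith [hdist.1]
    calc ‖F v y‖ ≤ 8 * (1/2)^M := F_bound hv M hy1 hy.2
      _ < ε := by linarith


lemma F_single (v : ℕ → E) {k : ℕ} {x : ℝ} (h1 : al k < x) (h2 : x < al (k+1)) :
    F v x = gb k x • v k := by
  rw [F_eq_sum (v := v) h2.le]
  rw [Finset.sum_eq_single k]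
  · intro k' hk' hne
    rw [Finset.mem_range] at hk'
    have hk'' : k' + 1 ≤ k := by omega
    rw [gb_eq_zero (Or.inr ((al_mono hk'').trans h1.le)), zero_smul]
  · intro h; exact absurd (Finset.self_mem_range_succ k) h

lemma sum_blocks {M : Type*} [AddCommMonoid M] (G : ℕ → M) (B n : ℕ) :
    ∑ i ∈ Finset.range (B*n), G i = ∑ k ∈ Finset.range n, ∑ j ∈ Finset.range B, G (B*k+j) := by
  induction n with
  | zero => simp
  | succ n ih => rw [Nat.mul_succ, Finset.sum_range_add, ih, Finset.sum_range_succ]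

lemma abs_sum (m : ℕ) : ∑ j ∈ Finset.range (2*m), |(j:ℝ) + 1/2 - m| = (m:ℝ)^2 := by
  rw [two_mul, Finset.sum_range_add, ← Finset.sum_add_distrib]
  have h : ∀ j ∈ Finset.range m, |(j:ℝ)+1/2-m| + |((m+j:ℕ):ℝ)+1/2-m| = (m:ℝ) := by
    intro j hj
    rw [Finset.mem_range] at hj
    have hj' : (j:ℝ)+1 ≤ m := by exact_mod_cast Nat.succ_le_of_lt hj
    have hj0 : (0:ℝ) ≤ j := Nat.cast_nonneg j
    push_cast
    rw [abs_of_nonpos (by linarith), abs_of_nonneg (by linarith)]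
    ring
  rw [Finset.sum_congr rfl h, Finset.sum_const, Finset.card_range, nsmul_eq_mul]
  ring

lemma tent_sum (k m : ℕ) (hm : 0 < m) :
    ∑ j ∈ Finset.range (2*m), ((1/2:ℝ)^(k+1)/(2*m)) *
      gb k (al k + ((j:ℝ)+1/2) * ((1/2:ℝ)^(k+1)/(2*m))) = 1 := by
  set Δ : ℝ := (1/2:ℝ)^(k+1)/(2*m) with hΔdef
  have hm0 : (m:ℝ) ≠ 0 := Nat.cast_ne_zero.mpr hm.ne'
  have hm0' : (0:ℝ) < m := Nat.cast_pos.mpr hm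
  have hΔ : 0 < Δ := by rw [hΔdef]; positivity
  have key : (2:ℝ)^(k+2) * (1/2)^(k+1) = 2 := by
    have h := two_pow_half_pow (k+1)
    rw [pow_succ 2 (k+1)]
    linear_combination 2 * h
  have hmΔ : (m:ℝ) * Δ = (1/2:ℝ)^(k+2) := by
    rw [hΔdef, pow_succ, pow_succ]
    field_simp
    rw [pow_succ]
    ring
  have h2Δ : (2:ℝ)^(k+2) * Δ = 1/m := by
    rw [hΔdef, mul_div_assoc', key, div_eq_div_iff (by positivity) hm0]
    ring
  have hgb : ∀ j ∈ Finset.range (2*m),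
      Δ * gb k (al k + ((j:ℝ)+1/2) * Δ) = Δ * (2^(k+2) * (1 - |(j:ℝ)+1/2-(m:ℝ)|/m)) := by
    intro j hj
    rw [Finset.mem_range] at hj
    have hjR : (j:ℝ) ≤ 2*m - 1 := by
      have : (j:ℝ)+1 ≤ 2*m := by exact_mod_cast Nat.succ_le_of_lt hj
      linarith
    have hj0 : (0:ℝ) ≤ j := Nat.cast_nonneg j
    congr 1
    unfold gb
    have hx : al k + ((j:ℝ)+1/2) * Δ - md k = ((j:ℝ)+1/2-m) * Δ := by
      simp only [md]
      rw [← hmΔ]; ring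
    rw [hx, abs_mul, abs_of_pos hΔ, show (2:ℝ)^(k+2) * (|(j:ℝ)+1/2-(m:ℝ)| * Δ)
        = |(j:ℝ)+1/2-(m:ℝ)| * ((2:ℝ)^(k+2) * Δ) by ring, h2Δ]
    have habs : |(j:ℝ)+1/2-(m:ℝ)| ≤ m - 1/2 := by
      rw [abs_le]; constructor <;> linarith
    have hnn : 0 ≤ 1 - |(j:ℝ)+1/2-(m:ℝ)| * (1/m) := by
      have : |(j:ℝ)+1/2-(m:ℝ)| * (1/m) ≤ (m - 1/2) * (1/m) := by
        apply mul_le_mul_of_nonneg_right habs (by positivity)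
      have h2 : ((m:ℝ) - 1/2) * (1/m) < 1 := by
        rw [mul_one_div, div_lt_one hm0']
        linarith
      linarith
    rw [max_eq_right (by linarith [hnn])]
    rw [mul_one_div]
  rw [Finset.sum_congr rfl hgb]
  have : ∑ j ∈ Finset.range (2*m), Δ * (2^(k+2) * (1 - |(j:ℝ)+1/2-(m:ℝ)|/m))
      = Δ * 2^(k+2) * (2*m - ((m:ℝ)^2)/m) := by
    rw [← Finset.mul_sum, ← Finset.mul_sum]
    rw [Finset.sum_sub_distrib, Finset.sum_const, Finset.card_range]
    rw [← Finset.sum_div, abs_sum]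
    push_cast
    ring
  rw [this]
  have hsq : ((m:ℝ)^2)/m = m := by field_simp
  rw [hsq]
  have hfin : Δ * 2^(k+2) * (2*(m:ℝ) - m) = ((m:ℝ)*Δ) * 2^(k+2) := by ring
  rw [hfin, hmΔ]
  linear_combination two_pow_half_pow (k+2)

end F

section Part

variable {E : Type*} [NormedAddCommGroup E] [NormedSpace ℝ E]

noncomputable def dl (m k : ℕ) : ℝ := (1/2:ℝ)^(k+1)/(2*m)

noncomputable def pp (m n i : ℕ) : ℝ :=
  if i ≤ 2*m*n then al (i/(2*m)) + (↑(i % (2*m)) : ℝ) * dl m (i/(2*m)) else 1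

noncomputable def tt (m n i : ℕ) : ℝ :=
  if i < 2*m*n then pp m n i + dl m (i/(2*m)) / 2 else 1

variable {m n : ℕ}

lemma dl_pos (hm : 0 < m) (k : ℕ) : 0 < dl m k := by
  have : (0:ℝ) < m := Nat.cast_pos.mpr hm
  unfold dl; positivity

lemma dl_le (hm : 0 < m) (k : ℕ) : dl m k ≤ 1/(4*m) := by
  have hm' : (0:ℝ) < m := Nat.cast_pos.mpr hm
  unfold dl
  rw [div_le_div_iff₀ (by positivity) (by positivity)]
  have h1 : (1/2:ℝ)^(k+1) ≤ (1/2)^1 := pow_le_pow_of_le_one (by norm_num) (by norm_num) (by omega)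
  nlinarith

lemma two_m_dl (hm : 0 < m) (k : ℕ) : (2*(m:ℝ)) * dl m k = (1/2)^(k+1) := by
  have hm' : (0:ℝ) < m := Nat.cast_pos.mpr hm
  unfold dl; field_simp

lemma pp_zero (hm : 0 < m) : pp m n 0 = 0 := by
  simp [pp, al_zero]

lemma pp_last (hm : 0 < m) : pp m n (2*m*n) = al n := by
  simp [pp, Nat.mul_div_cancel_left _ (by omega : 0 < 2*m), Nat.mul_mod_right]

lemma pp_end : pp m n (2*m*n + 1) = 1 := by
  rcases Nat.eq_zero_or_pos (2*m*n) with h | h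
  · rw [pp, if_neg (by omega)]
  · rw [pp, if_neg (by omega)]

lemma pp_block (hm : 0 < m) {k j : ℕ} (hk : k < n) (hj : j ≤ 2*m) :
    pp m n (2*m*k + j) = al k + (j:ℝ) * dl m k := by
  have h2m : 0 < 2*m := by omega
  have hle : 2*m*k + j ≤ 2*m*n := by
    have h1 : 2*m*(k+1) ≤ 2*m*n := Nat.mul_le_mul_left _ hk
    have h2 : 2*m*(k+1) = 2*m*k + 2*m := by ring
    omega
  rw [pp, if_pos hle]
  rcases eq_or_lt_of_le hj with rfl | hjlt
  · have hidx : 2*m*k + 2*m = 2*m*(k+1) := by ring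
    rw [hidx, Nat.mul_div_cancel_left _ h2m, Nat.mul_mod_right]
    rw [al_succ]
    push_cast
    rw [← two_m_dl hm k]
    ring
  · rw [Nat.mul_add_div h2m, Nat.mul_add_mod, Nat.div_eq_of_lt hjlt, Nat.mod_eq_of_lt hjlt,
      Nat.add_zero]

lemma idx_decomp (hm : 0 < m) {i : ℕ} (hi : i < 2*m*n) :
    i / (2*m) < n ∧ i % (2*m) < 2*m ∧ 2*m*(i/(2*m)) + i % (2*m) = i := by
  have h2m : 0 < 2*m := by omega
  refine ⟨?_, Nat.mod_lt _ h2m, Nat.div_add_mod i (2*m)⟩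
  rw [Nat.div_lt_iff_lt_mul h2m]
  rwa [Nat.mul_comm (2*m) n] at hi

lemma pp_diff (hm : 0 < m) {i : ℕ} (hi : i < 2*m*n) :
    pp m n (i+1) - pp m n i = dl m (i/(2*m)) := by
  obtain ⟨hk, hj, hd⟩ := idx_decomp (n := n) hm hi
  set k := i/(2*m); set j := i % (2*m)
  have h1 : pp m n i = al k + (j:ℝ) * dl m k := by rw [← hd]; exact pp_block hm hk hj.le
  have h2 : pp m n (i+1) = al k + ((j:ℝ)+1) * dl m k := by
    have : i + 1 = 2*m*k + (j+1) := by omega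
    rw [this, pp_block hm hk (by omega)]
    push_cast; ring_nf
  rw [h1, h2]; ring

lemma pp_mono (hm : 0 < m) {i : ℕ} (hi : i < 2*m*n + 1) : pp m n i < pp m n (i+1) := by
  rcases Nat.lt_or_ge i (2*m*n) with h | h
  · have := pp_diff (n := n) hm h
    have hpos := dl_pos hm (i/(2*m))
    linarith
  · have hieq : i = 2*m*n := by omega
    subst hieq
    rw [pp_last hm, pp_end]
    exact al_lt_one n

lemma tt_mem (hm : 0 < m) {i : ℕ} (hi : i < 2*m*n + 1) :
    tt m n i ∈ Set.Icc (pp m n i) (pp m n (i+1)) := by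
  rcases Nat.lt_or_ge i (2*m*n) with h | h
  · rw [tt, if_pos h]
    have hd := pp_diff (n := n) hm h
    have hpos := dl_pos hm (i/(2*m))
    constructor <;> [linarith; linarith]
  · have hieq : i = 2*m*n := by omega
    subst hieq
    rw [tt, if_neg (by omega), pp_last hm, pp_end]
    exact ⟨(al_lt_one n).le, le_refl 1⟩

lemma riemann_sum_eq (v : ℕ → E) (hm : 0 < m) :
    ∑ i ∈ Finset.range (2*m*n + 1), (pp m n (i+1) - pp m n i) • F v (tt m n i)
      = ∑ k ∈ Finset.range n, v k := by
  rw [Finset.sum_range_succ]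
  have hlast : tt m n (2*m*n) = 1 := by rw [tt, if_neg (by omega)]
  rw [hlast, F_one, smul_zero, add_zero]
  rw [sum_blocks]
  apply Finset.sum_congr rfl
  intro k hk
  rw [Finset.mem_range] at hk
  have h2m : 0 < 2*m := by omega
  have hterm : ∀ j ∈ Finset.range (2*m),
      (pp m n (2*m*k+j+1) - pp m n (2*m*k+j)) • F v (tt m n (2*m*k+j))
        = (dl m k * gb k (al k + ((j:ℝ)+1/2) * dl m k)) • v k := by
    intro j hj
    rw [Finset.mem_range] at hj
    have hilt : 2*m*k + j < 2*m*n := by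
      have h1 : 2*m*(k+1) ≤ 2*m*n := Nat.mul_le_mul_left _ hk
      have h2 : 2*m*(k+1) = 2*m*k + 2*m := by ring
      omega
    have hdiv : (2*m*k + j) / (2*m) = k := by
      rw [Nat.mul_add_div h2m, Nat.div_eq_of_lt hj, Nat.add_zero]
    have hdiff : pp m n (2*m*k+j+1) - pp m n (2*m*k+j) = dl m k := by
      have := pp_diff (n := n) hm hilt
      rwa [hdiv] at this
    have htt : tt m n (2*m*k+j) = al k + ((j:ℝ)+1/2) * dl m k := by
      rw [tt, if_pos hilt, hdiv, pp_block hm hk hj.le]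
      ring
    have hx1 : al k < al k + ((j:ℝ)+1/2) * dl m k := by
      have hpos := dl_pos hm k
      have hj0 : (0:ℝ) ≤ j := Nat.cast_nonneg j
      nlinarith
    have hx2 : al k + ((j:ℝ)+1/2) * dl m k < al (k+1) := by
      have hpos := dl_pos hm k
      have hjR : (j:ℝ)+1 ≤ 2*m := by exact_mod_cast Nat.succ_le_of_lt hj
      have h2m' := two_m_dl hm k
      rw [al_succ]
      nlinarith
    rw [hdiff, htt, F_single v hx1 hx2, smul_smul]
  rw [Finset.sum_congr rfl hterm, ← Finset.sum_smul]
  have hts : ∑ j ∈ Finset.range (2*m), dl m k * gb k (al k + ((j:ℝ)+1/2) * dl m k) = 1 := by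
    unfold dl
    exact tent_sum k m hm
  rw [hts, one_smul]

end Part

theorem part2 {E : Type*} [NormedAddCommGroup E] [NormedSpace ℝ E]
    (hC : ¬ CompleteSpace E) :
    ∃ f : ℝ → E, ContinuousOn f (Set.Icc 0 1) ∧ ¬ ∃ y, HasRiemannIntegral f 0 1 y := by
  have h1 : ¬ ∀ (u : ℕ → E), CauchySeq u → ∃ a, Tendsto u atTop (𝓝 a) :=
    fun h => hC (Metric.complete_of_cauchySeq_tendsto h)
  push_neg at h1
  obtain ⟨u, hu, hnc⟩ := h1
  choose Bd hBd using fun q : ℕ => Metric.cauchySeq_iff.mp hu ((1/4:ℝ)^q) (by positivity)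
  let φ : ℕ → ℕ := fun q => Nat.rec (Bd 0) (fun q ih => max (Bd (q+1)) (ih + 1)) q
  have hφsucc : ∀ q, φ (q+1) = max (Bd (q+1)) (φ q + 1) := fun q => rfl
  have hφs : StrictMono φ := strictMono_nat_of_lt_succ (fun q => by
    rw [hφsucc]; omega)
  have hφB : ∀ q, Bd q ≤ φ q := by
    intro q
    cases q with
    | zero => exact le_refl _
    | succ q => rw [hφsucc]; omega
  set v : ℕ → E := fun q => u (φ (q+1)) - u (φ q) with hvdef
  have hv : ∀ q, ‖v q‖ ≤ (1/4:ℝ)^q := by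
    intro q
    have h := hBd q (φ (q+1)) ((hφB q).trans (hφs (Nat.lt_succ_self q)).le) (φ q) (hφB q)
    rw [dist_eq_norm] at h
    exact h.le
  refine ⟨F v, F_continuousOn hv, ?_⟩
  rintro ⟨y, hy⟩
  have hS : Tendsto (fun n => ∑ k ∈ Finset.range n, v k) atTop (𝓝 y) := by
    rw [Metric.tendsto_atTop]
    intro ε hε
    obtain ⟨δ, hδ, hδf⟩ := hy ε hε
    obtain ⟨m₀, hm₀⟩ := exists_nat_gt (1/(4*δ))
    set m := m₀ + 1 with hmdef
    have hm : 0 < m := Nat.succ_pos _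
    have hmR : 1/(4*δ) < (m:ℝ) := by
      have : (m₀:ℝ) ≤ m := by exact_mod_cast Nat.le_succ m₀
      linarith
    have hmR0 : (0:ℝ) < m := Nat.cast_pos.mpr hm
    have hmδ : 1/(4*(m:ℝ)) < δ := by
      rw [div_lt_iff₀ (by positivity)]
      rw [div_lt_iff₀ (by positivity)] at hmR
      nlinarith
    obtain ⟨N₀, hN₀⟩ := exists_pow_lt_of_lt_one hδ (show (1:ℝ)/2 < 1 by norm_num)
    refine ⟨N₀, ?_⟩
    intro n hn
    have hmesh : ∀ i < 2*m*n+1, pp m n (i+1) - pp m n i < δ := by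
      intro i hi
      rcases Nat.lt_or_ge i (2*m*n) with h | h
      · rw [pp_diff hm h]
        exact lt_of_le_of_lt (dl_le hm _) hmδ
      · have hieq : i = 2*m*n := by omega
        subst hieq
        rw [pp_last hm, pp_end]
        have h1 : (1/2:ℝ)^n ≤ (1/2)^N₀ :=
          pow_le_pow_of_le_one (by norm_num) (by norm_num) hn
        simp only [al]
        linarith
    have hres := hδf (2*m*n+1) (pp m n) (tt m n) (pp_zero hm) pp_end
      (fun i hi => pp_mono hm hi) hmesh (fun i hi => tt_mem hm hi)
    rw [riemann_sum_eq v hm] at hres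
    rw [dist_eq_norm]
    exact hres
  have hsum : ∀ n, ∑ k ∈ Finset.range n, v k = u (φ n) - u (φ 0) := fun n =>
    Finset.sum_range_sub (fun q => u (φ q)) n
  have hT : Tendsto (fun n => u (φ n)) atTop (𝓝 (y + u (φ 0))) := by
    have h2 := hS.add_const (u (φ 0))
    have h3 : (fun n => (∑ k ∈ Finset.range n, v k) + u (φ 0)) = fun n => u (φ n) := by
      funext n
      rw [hsum n]
      abel
    rwa [h3] at h2
  exact hnc _ (tendsto_nhds_of_cauchySeq_of_subseq hu hφs.tendsto_atTop hT)

end RiemannAux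

/-- "Continuous on a segment implies integrable on that segment" holds for
`E`-valued functions iff `E` is complete: if `E` is complete every continuous
function on `[a,b]` is integrable, and if `E` is not complete some continuous
function on `[0,1]` is not integrable. -/
theorem continuous_implies_integrable_iff_complete (E : Type*) [NormedAddCommGroup E]
    [NormedSpace ℝ E] :
    (CompleteSpace E → ∀ (a b : ℝ) (f : ℝ → E), a ≤ b → ContinuousOn f (Set.Icc a b) →
      ∃ y, HasRiemannIntegral f a b y) ∧
    (¬ CompleteSpace E → ∃ f : ℝ → E, ContinuousOn f (Set.Icc 0 1) ∧
      ¬ ∃ y, HasRiemannIntegral f 0 1 y) := by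
  constructor
  · intro hc a b f hab hf
    exact @RiemannAux.part1 E _ _ hc a b f hab hf
  · exact RiemannAux.part2
end

section
/- For a real normed vector space E, the Chasles property (a function integrable on [a,b] is integrable on every subinterval [a,c] and [c,b], with additivity of integrals) holds for all E-valued functions on all intervals if and only if E is complete. -/
open Filter Topology

/-- The Chasles (interval additivity) property for `E`-valued Riemann integrals:
whenever `f` is integrable on `[a,b]` and `a ≤ c ≤ b`, it is integrable on `[a,c]`
and `[c,b]` and the integrals add up. -/
def ChaslesProperty (E : Type*) [NormedAddCommGroup E] [NormedSpace ℝ E] : Prop :=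
  ∀ (a b c : ℝ) (f : ℝ → E) (y : E), a ≤ c → c ≤ b → HasRiemannIntegral f a b y →
    ∃ y₁ y₂, HasRiemannIntegral f a c y₁ ∧ HasRiemannIntegral f c b y₂ ∧ y = y₁ + y₂

namespace ChaslesAux

variable {E : Type*} [NormedAddCommGroup E] [NormedSpace ℝ E]

/-- Riemann sum of a tagged partition. -/
def RS (f : ℝ → E) (n : ℕ) (p t : ℕ → ℝ) : E :=
  ∑ i ∈ Finset.range n, (p (i + 1) - p i) • f (t i)

/-- `(n, p, t)` is a `δ`-fine tagged partition of `[a, b]`. -/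
def IsPart (a b δ : ℝ) (n : ℕ) (p t : ℕ → ℝ) : Prop :=
  p 0 = a ∧ p n = b ∧ (∀ i < n, p i < p (i + 1)) ∧ (∀ i < n, p (i + 1) - p i < δ) ∧
    (∀ i < n, t i ∈ Set.Icc (p i) (p (i + 1)))

lemma hri_iff {f : ℝ → E} {a b : ℝ} {y : E} :
    HasRiemannIntegral f a b y ↔
      ∀ ε > 0, ∃ δ > 0, ∀ n p t, IsPart a b δ n p t → ‖RS f n p t - y‖ < ε := by
  constructor
  · intro h ε hε
    obtain ⟨δ, hδ, H⟩ := h ε hε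
    exact ⟨δ, hδ, fun n p t ⟨h1, h2, h3, h4, h5⟩ => H n p t h1 h2 h3 h4 h5⟩
  · intro h ε hε
    obtain ⟨δ, hδ, H⟩ := h ε hε
    exact ⟨δ, hδ, fun n p t h1 h2 h3 h4 h5 => H n p t ⟨h1, h2, h3, h4, h5⟩⟩

lemma isPart_mono {a b δ δ' : ℝ} {n : ℕ} {p t : ℕ → ℝ} (hδ : δ ≤ δ')
    (h : IsPart a b δ n p t) : IsPart a b δ' n p t :=
  ⟨h.1, h.2.1, h.2.2.1, fun i hi => lt_of_lt_of_le (h.2.2.2.1 i hi) hδ, h.2.2.2.2⟩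

/-- Existence of a fine tagged partition of any interval. -/
lemma exists_isPart (u v δ : ℝ) (huv : u ≤ v) (hδ : 0 < δ) :
    ∃ n p t, IsPart u v δ n p t := by
  rcases eq_or_lt_of_le huv with h | h
  · exact ⟨0, fun _ => u, fun _ => u, rfl, h ▸ rfl,
      fun i hi => absurd hi (Nat.not_lt_zero i),
      fun i hi => absurd hi (Nat.not_lt_zero i),
      fun i hi => absurd hi (Nat.not_lt_zero i)⟩
  · set n : ℕ := ⌈(v - u) / δ⌉₊ + 1 with hn
    have hn0 : (0:ℝ) < (n : ℝ) := by positivity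
    have hvu : 0 < v - u := sub_pos.2 h
    have hq : 0 < (v - u) / (n : ℝ) := by positivity
    have hlt : (v - u) / (n : ℝ) < δ := by
      rw [div_lt_iff₀ hn0]
      have h1 : (v - u) / δ < (n : ℝ) := by
        refine lt_of_le_of_lt (Nat.le_ceil _) ?_
        exact_mod_cast Nat.lt_succ_self _
      calc v - u = (v - u) / δ * δ := by field_simp
        _ < (n : ℝ) * δ := mul_lt_mul_of_pos_right h1 hδ
        _ = δ * (n : ℝ) := mul_comm _ _
    have key : ∀ i : ℕ, (u + ((i+1 : ℕ) : ℝ) * ((v - u) / n)) - (u + (i : ℝ) * ((v - u) / n))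
        = (v - u) / n := by
      intro i; push_cast; ring
    refine ⟨n, fun i => u + i * ((v - u) / n), fun i => u + i * ((v - u) / n),
      by simp, by field_simp; ring, fun i _ => ?_, fun i _ => ?_, fun i _ => ?_⟩
    · have := key i; simp only [] at this ⊢; nlinarith
    · have := key i; simp only [] at this ⊢; nlinarith
    · have := key i
      refine ⟨le_refl _, ?_⟩
      simp only [] at this ⊢; nlinarith

/-- Concatenating a partition of `[a,c]` with one of `[c,b]`. -/
lemma isPart_concat (f : ℝ → E) {a b c δ : ℝ} {n m : ℕ} {p t q s : ℕ → ℝ}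
    (h1 : IsPart a c δ n p t) (h2 : IsPart c b δ m q s) :
    ∃ N P T, IsPart a b δ N P T ∧ RS f N P T = RS f n p t + RS f m q s := by
  obtain ⟨hp0, hpn, hpm, hpf, hpt⟩ := h1
  obtain ⟨hq0, hqm, hqm', hqf, hqt⟩ := h2
  set P : ℕ → ℝ := fun i => if i < n then p i else q (i - n) with hP
  set T : ℕ → ℝ := fun i => if i < n then t i else s (i - n) with hT
  have hPle : ∀ j, j ≤ n → P j = p j := by
    intro j hj
    rcases lt_or_eq_of_le hj with hj' | hj'
    · simp [hP, hj']
    · subst hj'; simp [hP, hq0, hpn]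
  have hPge : ∀ j : ℕ, P (n + j) = q j := by
    intro j; simp [hP]
  have hTge : ∀ j : ℕ, T (n + j) = s j := by
    intro j; simp [hT]
  have hmono : ∀ i < n + m, P i < P (i + 1) := by
    intro i hi
    by_cases h : i < n
    · rw [hPle i h.le, hPle (i+1) h]
      exact hpm i h
    · push_neg at h
      obtain ⟨j, rfl⟩ := Nat.exists_eq_add_of_le h
      rw [hPge j, show n + j + 1 = n + (j + 1) by ring, hPge (j+1)]
      exact hqm' j (by omega)
  have hfine : ∀ i < n + m, P (i + 1) - P i < δ := by
    intro i hi
    by_cases h : i < n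
    · rw [hPle i h.le, hPle (i+1) h]
      exact hpf i h
    · push_neg at h
      obtain ⟨j, rfl⟩ := Nat.exists_eq_add_of_le h
      rw [hPge j, show n + j + 1 = n + (j + 1) by ring, hPge (j+1)]
      exact hqf j (by omega)
  have htag : ∀ i < n + m, T i ∈ Set.Icc (P i) (P (i + 1)) := by
    intro i hi
    by_cases h : i < n
    · rw [hPle i h.le, hPle (i+1) h]
      simpa [hT, h] using hpt i h
    · push_neg at h
      obtain ⟨j, rfl⟩ := Nat.exists_eq_add_of_le h
      rw [hPge j, show n + j + 1 = n + (j + 1) by ring, hPge (j+1), hTge j]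
      exact hqt j (by omega)
  refine ⟨n + m, P, T, ⟨?_, ?_, hmono, hfine, htag⟩, ?_⟩
  · rw [hPle 0 (Nat.zero_le n), hp0]
  · rw [hPge m, hqm]
  · show ∑ i ∈ Finset.range (n + m), (P (i+1) - P i) • f (T i) = _
    rw [Finset.range_eq_Ico, ← Finset.sum_Ico_consecutive _ (Nat.zero_le n) (Nat.le_add_right n m)]
    congr 1
    · rw [← Finset.range_eq_Ico]
      refine Finset.sum_congr rfl fun i hi => ?_
      rw [Finset.mem_range] at hi
      rw [hPle i hi.le, hPle (i+1) hi]
      simp [hT, hi]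
    · rw [Finset.sum_Ico_eq_sum_range]
      simp only [Nat.add_sub_cancel_left]
      refine Finset.sum_congr rfl fun j hj => ?_
      rw [show n + j + 1 = n + (j + 1) by ring, hPge (j+1), hPge j, hTge j]

/-- In a complete space, the Cauchy criterion gives existence of the Riemann integral. -/
lemma exists_hri_of_cauchy [CompleteSpace E] {f : ℝ → E} {u v : ℝ} (huv : u ≤ v)
    (hC : ∀ ε > 0, ∃ δ > 0, ∀ n p t n' p' t', IsPart u v δ n p t → IsPart u v δ n' p' t' →
      ‖RS f n p t - RS f n' p' t'‖ < ε) :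
    ∃ z, HasRiemannIntegral f u v z := by
  have hepos : ∀ m : ℕ, (0:ℝ) < 1 / (m + 1) := by intro m; positivity
  choose δ hδpos hδ using fun m : ℕ => hC (1 / (m + 1)) (hepos m)
  set δ' : ℕ → ℝ := fun m => (Finset.range (m + 1)).inf' ⟨0, by simp⟩ δ with hδ'
  have hδ'pos : ∀ m, 0 < δ' m := by
    intro m
    exact (Finset.lt_inf'_iff _).2 (fun k _ => hδpos k)
  have hδ'le : ∀ k m, k ≤ m → δ' m ≤ δ k := by
    intro k m hkm
    exact Finset.inf'_le _ (Finset.mem_range.2 (by omega))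
  choose nn PP TT hPart using fun m : ℕ => exists_isPart u v (δ' m) huv (hδ'pos m)
  set sq : ℕ → E := fun m => RS f (nn m) (PP m) (TT m) with hsq
  have key : ∀ (k : ℕ) (n p t), IsPart u v (δ' k) n p t → ∀ j, k ≤ j →
      ‖RS f n p t - sq j‖ < 1 / (k + 1) := by
    intro k n p t hpt j hj
    exact hδ k _ _ _ _ _ _ (isPart_mono (hδ'le k k le_rfl) hpt)
      (isPart_mono (hδ'le k j hj) (hPart j))
  have hcauchy : CauchySeq sq := by
    rw [Metric.cauchySeq_iff']
    intro ε hε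
    obtain ⟨k, hk⟩ := exists_nat_one_div_lt hε
    refine ⟨k, fun m hm => ?_⟩
    rw [dist_eq_norm]
    calc ‖sq m - sq k‖ = ‖sq k - sq m‖ := norm_sub_rev _ _
      _ < 1 / (k + 1) := key k _ _ _ (hPart k) m hm
      _ < ε := by exact_mod_cast hk
  obtain ⟨z, hz⟩ := cauchySeq_tendsto_of_complete hcauchy
  refine ⟨z, hri_iff.2 ?_⟩
  intro ε hε
  obtain ⟨k, hk⟩ := exists_nat_one_div_lt (half_pos hε)
  refine ⟨δ' k, hδ'pos k, fun n p t hpt => ?_⟩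
  have hlim : Filter.Tendsto (fun j => ‖RS f n p t - sq j‖) atTop (𝓝 ‖RS f n p t - z‖) :=
    (tendsto_const_nhds.sub hz).norm
  have hle : ‖RS f n p t - z‖ ≤ 1 / (k + 1) := by
    refine le_of_tendsto hlim ?_
    filter_upwards [Filter.eventually_ge_atTop k] with j hj
    exact (key k n p t hpt j hj).le
  calc ‖RS f n p t - z‖ ≤ 1 / (k + 1) := hle
    _ < ε / 2 := by exact_mod_cast hk
    _ < ε := by linarith

/-- Completeness implies the Chasles property. -/
lemma chasles_of_complete [CompleteSpace E] : ChaslesProperty E := by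
  intro a b c f y hac hcb hy
  rw [hri_iff] at hy
  -- Cauchy criterion on [a, c]
  have hCl : ∀ ε > 0, ∃ δ > 0, ∀ n p t n' p' t', IsPart a c δ n p t → IsPart a c δ n' p' t' →
      ‖RS f n p t - RS f n' p' t'‖ < ε := by
    intro ε hε
    obtain ⟨δ, hδ, H⟩ := hy (ε / 2) (half_pos hε)
    refine ⟨δ, hδ, fun n p t n' p' t' h1 h2 => ?_⟩
    obtain ⟨m, q, s, hq⟩ := exists_isPart c b δ hcb hδ
    obtain ⟨N, P, T, hNP, hNS⟩ := isPart_concat f h1 hq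
    obtain ⟨N', P', T', hNP', hNS'⟩ := isPart_concat f h2 hq
    have e1 := H N P T hNP
    have e2 := H N' P' T' hNP'
    rw [hNS] at e1
    rw [hNS'] at e2
    calc ‖RS f n p t - RS f n' p' t'‖
        = ‖(RS f n p t + RS f m q s - y) - (RS f n' p' t' + RS f m q s - y)‖ := by
          congr 1; abel
      _ ≤ ‖RS f n p t + RS f m q s - y‖ + ‖RS f n' p' t' + RS f m q s - y‖ :=
          norm_sub_le _ _
      _ < ε / 2 + ε / 2 := add_lt_add e1 e2
      _ = ε := add_halves ε
  have hCr : ∀ ε > 0, ∃ δ > 0, ∀ n p t n' p' t', IsPart c b δ n p t → IsPart c b δ n' p' t' →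
      ‖RS f n p t - RS f n' p' t'‖ < ε := by
    intro ε hε
    obtain ⟨δ, hδ, H⟩ := hy (ε / 2) (half_pos hε)
    refine ⟨δ, hδ, fun n p t n' p' t' h1 h2 => ?_⟩
    obtain ⟨m, q, s, hq⟩ := exists_isPart a c δ hac hδ
    obtain ⟨N, P, T, hNP, hNS⟩ := isPart_concat f hq h1
    obtain ⟨N', P', T', hNP', hNS'⟩ := isPart_concat f hq h2
    have e1 := H N P T hNP
    have e2 := H N' P' T' hNP'
    rw [hNS] at e1
    rw [hNS'] at e2
    calc ‖RS f n p t - RS f n' p' t'‖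
        = ‖(RS f m q s + RS f n p t - y) - (RS f m q s + RS f n' p' t' - y)‖ := by
          congr 1; abel
      _ ≤ ‖RS f m q s + RS f n p t - y‖ + ‖RS f m q s + RS f n' p' t' - y‖ :=
          norm_sub_le _ _
      _ < ε / 2 + ε / 2 := add_lt_add e1 e2
      _ = ε := add_halves ε
  obtain ⟨y₁, hy₁⟩ := exists_hri_of_cauchy hac hCl
  obtain ⟨y₂, hy₂⟩ := exists_hri_of_cauchy hcb hCr
  refine ⟨y₁, y₂, hy₁, hy₂, ?_⟩
  have hdiff : ∀ ε > 0, ‖y - (y₁ + y₂)‖ < ε := by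
    intro ε hε
    have hε3 : 0 < ε / 3 := by linarith
    obtain ⟨δ₀, hδ₀, H₀⟩ := hy (ε / 3) hε3
    obtain ⟨δ₁, hδ₁, H₁⟩ := hri_iff.1 hy₁ (ε / 3) hε3
    obtain ⟨δ₂, hδ₂, H₂⟩ := hri_iff.1 hy₂ (ε / 3) hε3
    set δ := min δ₀ (min δ₁ δ₂) with hδdef
    have hδ : 0 < δ := lt_min hδ₀ (lt_min hδ₁ hδ₂)
    obtain ⟨n, p, t, hp⟩ := exists_isPart a c δ hac hδ
    obtain ⟨m, q, s, hq⟩ := exists_isPart c b δ hcb hδ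
    obtain ⟨N, P, T, hNP, hNS⟩ := isPart_concat f hp hq
    have e0 := H₀ N P T (isPart_mono (min_le_left _ _) hNP)
    have e1 := H₁ n p t (isPart_mono ((min_le_right _ _).trans (min_le_left _ _)) hp)
    have e2 := H₂ m q s (isPart_mono ((min_le_right _ _).trans (min_le_right _ _)) hq)
    rw [hNS] at e0
    calc ‖y - (y₁ + y₂)‖
        = ‖-(RS f n p t + RS f m q s - y) + (RS f n p t - y₁) + (RS f m q s - y₂)‖ := by
          congr 1; abel
      _ ≤ ‖-(RS f n p t + RS f m q s - y) + (RS f n p t - y₁)‖ + ‖RS f m q s - y₂‖ :=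
          norm_add_le _ _
      _ ≤ ‖-(RS f n p t + RS f m q s - y)‖ + ‖RS f n p t - y₁‖ + ‖RS f m q s - y₂‖ := by
          gcongr; exact norm_add_le _ _
      _ = ‖RS f n p t + RS f m q s - y‖ + ‖RS f n p t - y₁‖ + ‖RS f m q s - y₂‖ := by
          rw [norm_neg]
      _ < ε / 3 + ε / 3 + ε / 3 := by gcongr
      _ = ε := by ring
  by_contra hne
  have h0 : 0 < ‖y - (y₁ + y₂)‖ := by
    rw [norm_pos_iff, sub_ne_zero]
    exact hne
  exact lt_irrefl _ (hdiff _ h0)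

/-! ### The forward direction: Chasles implies completeness -/

open scoped Classical in
/-- Dyadic index: the unique `k` with `x ∈ [1 - 2⁻ᵏ, 1 - 2⁻ᵏ⁻¹)` (for `x ∈ [0,1)`). -/
noncomputable def Kf (x : ℝ) : ℕ :=
  if h : ∃ k : ℕ, x < 1 - (2:ℝ)⁻¹ ^ (k + 1) then Nat.find h else 0

lemma Kf_exists {x : ℝ} (hx : x < 1) : ∃ k : ℕ, x < 1 - (2:ℝ)⁻¹ ^ (k + 1) := by
  obtain ⟨k, hk⟩ := exists_pow_lt_of_lt_one (sub_pos.2 hx) (by norm_num : (2:ℝ)⁻¹ < 1)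
  refine ⟨k, ?_⟩
  have h2 : (2:ℝ)⁻¹ ^ (k + 1) ≤ (2:ℝ)⁻¹ ^ k :=
    pow_le_pow_of_le_one (by norm_num) (by norm_num) (Nat.le_succ k)
  linarith

lemma Kf_spec {x : ℝ} (hx : x < 1) : x < 1 - (2:ℝ)⁻¹ ^ (Kf x + 1) := by
  rw [Kf, dif_pos (Kf_exists hx)]
  exact Nat.find_spec (Kf_exists hx)

lemma Kf_lower {x : ℝ} (hx0 : 0 ≤ x) (hx : x < 1) : 1 - (2:ℝ)⁻¹ ^ (Kf x) ≤ x := by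
  rw [Kf, dif_pos (Kf_exists hx)]
  rcases Nat.eq_zero_or_pos (Nat.find (Kf_exists hx)) with h | h
  · rw [h]; simpa using hx0
  · have hmin := Nat.find_min (Kf_exists hx)
      (show Nat.find (Kf_exists hx) - 1 < Nat.find (Kf_exists hx) by omega)
    push_neg at hmin
    rwa [show Nat.find (Kf_exists hx) - 1 + 1 = Nat.find (Kf_exists hx) by omega] at hmin

lemma Kf_unique {x : ℝ} {k : ℕ} (h1 : 1 - (2:ℝ)⁻¹ ^ k ≤ x)
    (h2 : x < 1 - (2:ℝ)⁻¹ ^ (k + 1)) : Kf x = k := by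
  have hpow : (0:ℝ) < (2:ℝ)⁻¹ ^ (k + 1) := by positivity
  have hx1 : x < 1 := by linarith
  have hle : Kf x ≤ k := by
    rw [Kf, dif_pos (Kf_exists hx1)]
    exact Nat.find_min' _ h2
  have hge : k ≤ Kf x := by
    by_contra hcon
    push_neg at hcon
    have hs := Kf_spec hx1
    have hmono : (2:ℝ)⁻¹ ^ k ≤ (2:ℝ)⁻¹ ^ (Kf x + 1) :=
      pow_le_pow_of_le_one (by norm_num) (by norm_num) (by omega)
    linarith
  omega

/-- The step function built from the increments `d` of a Cauchy sequence. -/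
noncomputable def sg (d : ℕ → E) (x : ℝ) : E :=
  if 0 ≤ x ∧ x < 1 then (2:ℝ) ^ (Kf x + 1) • d (Kf x) else 0

lemma sg_eq (d : ℕ → E) {x : ℝ} {k : ℕ} (h1 : 1 - (2:ℝ)⁻¹ ^ k ≤ x)
    (h2 : x < 1 - (2:ℝ)⁻¹ ^ (k + 1)) : sg d x = (2:ℝ) ^ (k + 1) • d k := by
  have hk1 : (2:ℝ)⁻¹ ^ k ≤ 1 := pow_le_one₀ (by norm_num) (by norm_num)
  have hpow : (0:ℝ) < (2:ℝ)⁻¹ ^ (k + 1) := by positivity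
  have hx0 : 0 ≤ x := by linarith
  have hx1 : x < 1 := by linarith
  rw [sg, if_pos ⟨hx0, hx1⟩, Kf_unique h1 h2]

lemma two_pow_mul_four_inv_pow (k : ℕ) : (2:ℝ) ^ (k + 1) * (4:ℝ)⁻¹ ^ k = 2 * (2:ℝ)⁻¹ ^ k := by
  have h4 : (4:ℝ)⁻¹ = 2⁻¹ * 2⁻¹ := by norm_num
  rw [pow_succ, h4, mul_pow, ← mul_assoc, mul_comm ((2:ℝ)^k) 2, mul_assoc, mul_assoc]
  congr 1
  rw [← mul_assoc, ← mul_pow]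
  norm_num

lemma sg_norm (d : ℕ → E) (hd : ∀ k, ‖d k‖ ≤ (4:ℝ)⁻¹ ^ k) (N : ℕ) {x : ℝ}
    (hx : 1 - (2:ℝ)⁻¹ ^ N ≤ x) : ‖sg d x‖ ≤ 2 * (2:ℝ)⁻¹ ^ N := by
  have hNpos : (0:ℝ) < 2 * (2:ℝ)⁻¹ ^ N := by positivity
  rw [sg]
  split_ifs with h
  · obtain ⟨hx0, hx1⟩ := h
    have hkN : N ≤ Kf x := by
      by_contra hcon
      push_neg at hcon
      have h2 := Kf_spec hx1
      have hmono : (2:ℝ)⁻¹ ^ N ≤ (2:ℝ)⁻¹ ^ (Kf x + 1) :=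
        pow_le_pow_of_le_one (by norm_num) (by norm_num) (by omega)
      linarith
    rw [norm_smul, Real.norm_eq_abs, abs_of_pos (by positivity : (0:ℝ) < (2:ℝ)^(Kf x + 1))]
    calc (2:ℝ) ^ (Kf x + 1) * ‖d (Kf x)‖ ≤ (2:ℝ) ^ (Kf x + 1) * (4:ℝ)⁻¹ ^ (Kf x) :=
          mul_le_mul_of_nonneg_left (hd (Kf x)) (by positivity)
      _ = 2 * (2:ℝ)⁻¹ ^ (Kf x) := two_pow_mul_four_inv_pow _
      _ ≤ 2 * (2:ℝ)⁻¹ ^ N :=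
          mul_le_mul_of_nonneg_left
            (pow_le_pow_of_le_one (by norm_num) (by norm_num) hkN) (by norm_num)
  · simpa using hNpos.le

lemma pmono {n : ℕ} {p : ℕ → ℝ} (hm : ∀ i < n, p i < p (i + 1)) :
    ∀ i j, i ≤ j → j ≤ n → p i ≤ p j := by
  intro i j hij hjn
  induction j with
  | zero =>
    obtain rfl := Nat.le_zero.1 hij
    exact le_refl _
  | succ j ih =>
    rcases Nat.eq_or_lt_of_le hij with rfl | hlt
    · exact le_refl _
    · exact (ih (by omega) (by omega)).trans (hm j (by omega)).le

lemma sum_sub_telescope (p : ℕ → ℝ) {a b : ℕ} (hab : a ≤ b) :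
    ∑ i ∈ Finset.Ico a b, (p (i + 1) - p i) = p b - p a := by
  rw [Finset.sum_Ico_eq_sum_range]
  have h := Finset.sum_range_sub (fun i => p (a + i)) (b - a)
  simp only [Nat.add_zero] at h
  rw [Nat.add_sub_cancel' hab] at h
  rw [← h]
  refine Finset.sum_congr rfl fun i _ => ?_
  rw [show a + i + 1 = a + (i + 1) by omega]

lemma sum_le_of_subset {n : ℕ} {p : ℕ → ℝ} (hm : ∀ i < n, p i < p (i + 1))
    (T : Finset ℕ) (hT : T ⊆ Finset.range n) {x y : ℝ} (hxy : x ≤ y)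
    (hx : ∀ i ∈ T, x ≤ p i) (hy : ∀ i ∈ T, p (i + 1) ≤ y) :
    ∑ i ∈ T, (p (i + 1) - p i) ≤ y - x := by
  rcases T.eq_empty_or_nonempty with rfl | hne
  · simp; linarith
  · set a := T.min' hne with ha
    set b := T.max' hne with hb
    have haT : a ∈ T := T.min'_mem hne
    have hbT : b ∈ T := T.max'_mem hne
    have hbn : b < n := Finset.mem_range.1 (hT hbT)
    have hab : a ≤ b := T.min'_le b hbT
    have hTsub : T ⊆ Finset.Ico a (b + 1) := by
      intro i hi
      rw [Finset.mem_Ico]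
      exact ⟨T.min'_le i hi, by have := T.le_max' i hi; omega⟩
    calc ∑ i ∈ T, (p (i + 1) - p i) ≤ ∑ i ∈ Finset.Ico a (b + 1), (p (i + 1) - p i) := by
          refine Finset.sum_le_sum_of_subset_of_nonneg hTsub fun i hi _ => ?_
          rw [Finset.mem_Ico] at hi
          exact sub_nonneg.2 (hm i (by omega)).le
      _ = p (b + 1) - p a := sum_sub_telescope p (by omega)
      _ ≤ y - x := sub_le_sub (hy b hbT) (hx a haT)

lemma cover_lower {n : ℕ} {p : ℕ → ℝ} {δ x y : ℝ} (hδ : 0 < δ)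
    (hm : ∀ i < n, p i < p (i + 1)) (hf : ∀ i < n, p (i + 1) - p i < δ)
    (hx0 : p 0 ≤ x) (hxy : x ≤ y) (hyn : y < p n) :
    y - x - 2 * δ ≤
      ∑ i ∈ (Finset.range n).filter (fun i => x ≤ p i ∧ p (i + 1) ≤ y), (p (i + 1) - p i) := by
  classical
  have hmono := pmono hm
  have hex1 : ∃ i, x ≤ p i := ⟨n, (hxy.trans hyn.le)⟩
  have hex2 : ∃ i, y < p i := ⟨n, hyn⟩
  set m := Nat.find hex1 with hmdef
  set M' := Nat.find hex2 with hM'def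
  have hm1 : x ≤ p m := Nat.find_spec hex1
  have hm2 : ∀ i < m, p i < x := fun i hi => lt_of_not_ge (Nat.find_min hex1 hi)
  have hM'1 : y < p M' := Nat.find_spec hex2
  have hM'pos : 0 < M' := by
    rcases Nat.eq_zero_or_pos M' with h | h
    · exfalso
      rw [h] at hM'1
      linarith
    · exact h
  set M := M' - 1 with hMdef
  have hM1 : p M ≤ y := le_of_not_gt (Nat.find_min hex2 (by omega))
  have hM'n : M' ≤ n := Nat.find_min' hex2 hyn
  have hmn : m ≤ n := Nat.find_min' hex1 (hxy.trans hyn.le)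
  have hMn : M < n := by omega
  have hmub : p m < x + δ := by
    rcases Nat.eq_zero_or_pos m with h | h
    · rw [h]; linarith
    · have h1 : p (m - 1) < x := hm2 (m - 1) (by omega)
      have h2 : p (m - 1 + 1) - p (m - 1) < δ := hf (m - 1) (by omega)
      rw [show m - 1 + 1 = m by omega] at h2
      linarith
  have hMlb : y - δ < p M := by
    have h2 : p (M + 1) - p M < δ := hf M hMn
    rw [show M + 1 = M' by omega] at h2
    linarith
  have hnonneg : ∀ i ∈ (Finset.range n).filter (fun i => x ≤ p i ∧ p (i + 1) ≤ y),
      (0:ℝ) ≤ p (i + 1) - p i := by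
    intro i hi
    rw [Finset.mem_filter, Finset.mem_range] at hi
    exact sub_nonneg.2 (hm i hi.1).le
  by_cases hcase : m ≤ M
  · have hsub : Finset.Ico m M ⊆ (Finset.range n).filter (fun i => x ≤ p i ∧ p (i + 1) ≤ y) := by
      intro i hi
      rw [Finset.mem_Ico] at hi
      rw [Finset.mem_filter, Finset.mem_range]
      refine ⟨by omega, hm1.trans (hmono m i hi.1 (by omega)), ?_⟩
      exact (hmono (i + 1) M (by omega) (by omega)).trans hM1
    calc y - x - 2 * δ ≤ p M - p m := by linarith
      _ = ∑ i ∈ Finset.Ico m M, (p (i + 1) - p i) := (sum_sub_telescope p hcase).symm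
      _ ≤ _ := Finset.sum_le_sum_of_subset_of_nonneg hsub fun i hi _ => hnonneg i hi
  · push_neg at hcase
    have hpMx : p M < x := hm2 M hcase
    have hsum0 : (0:ℝ) ≤ ∑ i ∈ (Finset.range n).filter
        (fun i => x ≤ p i ∧ p (i + 1) ≤ y), (p (i + 1) - p i) :=
      Finset.sum_nonneg hnonneg
    linarith

lemma geom_half_le_two (N : ℕ) : ∑ k ∈ Finset.range N, (2:ℝ)⁻¹ ^ k ≤ 2 := by
  have h : ∀ N : ℕ, ∑ k ∈ Finset.range N, (2:ℝ)⁻¹ ^ k = 2 - 2 * (2:ℝ)⁻¹ ^ N := by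
    intro N
    induction N with
    | zero => simp
    | succ N ih =>
      rw [Finset.sum_range_succ, ih, pow_succ]
      ring
  rw [h]
  have : (0:ℝ) < (2:ℝ)⁻¹ ^ N := by positivity
  linarith

/-- The master estimate: any fine tagged partition of (approximately) `[0,1]`
has Riemann sum for `sg d` close to the partial sum `∑_{k<N} d k`. -/
lemma core (d : ℕ → E) (hd : ∀ k, ‖d k‖ ≤ (4:ℝ)⁻¹ ^ k) (N : ℕ) {δ : ℝ}
    (hδ0 : 0 < δ) {n : ℕ} {p t : ℕ → ℝ}
    (hp0 : p 0 = 0) (hpn1 : 1 - δ ≤ p n) (hpn2 : p n ≤ 1 + δ)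
    (hm : ∀ i < n, p i < p (i + 1)) (hf : ∀ i < n, p (i + 1) - p i < δ)
    (ht : ∀ i < n, t i ∈ Set.Icc (p i) (p (i + 1))) :
    ‖(∑ i ∈ Finset.range n, (p (i + 1) - p i) • sg d (t i)) - ∑ k ∈ Finset.range N, d k‖
      ≤ 16 * δ + 2 * (4:ℝ)⁻¹ ^ N := by
  classical
  have hmono := pmono hm
  have hNpow : (0:ℝ) < (2:ℝ)⁻¹ ^ N := by positivity
  have hN1 : (2:ℝ)⁻¹ ^ N ≤ 1 := pow_le_one₀ (by norm_num) (by norm_num)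
  have ht0 : ∀ i < n, 0 ≤ t i := by
    intro i hi
    have := hmono 0 i (Nat.zero_le i) hi.le
    rw [hp0] at this
    exact this.trans (ht i hi).1
  have htlb : ∀ i < n, t i - δ < p i := by
    intro i hi
    have h1 := (ht i hi).2
    have h2 := hf i hi
    linarith
  have htub : ∀ i < n, p (i + 1) < t i + δ := by
    intro i hi
    have h1 := (ht i hi).1
    have h2 := hf i hi
    linarith
  set c : ℕ → E := fun k => (2:ℝ) ^ (k + 1) • d k with hc
  have hck : ∀ k, ‖c k‖ ≤ 2 * (2:ℝ)⁻¹ ^ k := by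
    intro k
    rw [hc]
    simp only
    rw [norm_smul, Real.norm_eq_abs, abs_of_pos (by positivity : (0:ℝ) < (2:ℝ) ^ (k + 1))]
    calc (2:ℝ) ^ (k + 1) * ‖d k‖ ≤ (2:ℝ) ^ (k + 1) * (4:ℝ)⁻¹ ^ k :=
        mul_le_mul_of_nonneg_left (hd k) (by positivity)
      _ = 2 * (2:ℝ)⁻¹ ^ k := two_pow_mul_four_inv_pow k
  set s₁ := (Finset.range n).filter (fun i => t i < 1 - (2:ℝ)⁻¹ ^ N) with hs₁
  set s₂ := (Finset.range n).filter (fun i => ¬ t i < 1 - (2:ℝ)⁻¹ ^ N) with hs₂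
  have hsplit : ∑ i ∈ Finset.range n, (p (i + 1) - p i) • sg d (t i)
      = (∑ i ∈ s₁, (p (i + 1) - p i) • sg d (t i))
        + ∑ i ∈ s₂, (p (i + 1) - p i) • sg d (t i) :=
    (Finset.sum_filter_add_sum_filter_not _ _ _).symm
  -- the fiberwise decomposition of the sum over s₁
  have hmaps : ∀ i ∈ s₁, Kf (t i) ∈ Finset.range N := by
    intro i hi
    rw [hs₁, Finset.mem_filter, Finset.mem_range] at hi
    obtain ⟨hin, hit⟩ := hi
    have h0 : 0 ≤ t i := ht0 i hin
    have h1 : t i < 1 := by linarith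
    have hlow := Kf_lower h0 h1
    rw [Finset.mem_range]
    by_contra hcon
    push_neg at hcon
    have : (2:ℝ)⁻¹ ^ (Kf (t i)) ≤ (2:ℝ)⁻¹ ^ N :=
      pow_le_pow_of_le_one (by norm_num) (by norm_num) hcon
    linarith
  set L : ℕ → ℝ := fun k => ∑ i ∈ s₁.filter (fun i => Kf (t i) = k), (p (i + 1) - p i) with hL
  have hfiber : ∑ i ∈ s₁, (p (i + 1) - p i) • sg d (t i)
      = ∑ k ∈ Finset.range N, L k • c k := by
    rw [← Finset.sum_fiberwise_of_maps_to hmaps (fun i => (p (i + 1) - p i) • sg d (t i))]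
    refine Finset.sum_congr rfl fun k _ => ?_
    rw [hL]
    simp only
    rw [Finset.sum_smul]
    refine Finset.sum_congr rfl fun i hi => ?_
    rw [Finset.mem_filter] at hi
    obtain ⟨hi1, hKf⟩ := hi
    rw [hs₁, Finset.mem_filter, Finset.mem_range] at hi1
    obtain ⟨hin, hit⟩ := hi1
    have h0 : 0 ≤ t i := ht0 i hin
    have h1 : t i < 1 := by linarith
    have hlow := Kf_lower h0 h1
    have hspec := Kf_spec h1
    rw [hKf] at hlow hspec
    rw [sg_eq d hlow hspec, hc]
  -- upper bound for L k
  have hfsub : ∀ k, s₁.filter (fun i => Kf (t i) = k) ⊆ Finset.range n := by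
    intro k i hi
    rw [Finset.mem_filter] at hi
    rw [hs₁, Finset.mem_filter] at hi
    exact hi.1.1
  have hLnonneg : ∀ k, 0 ≤ L k := by
    intro k
    refine Finset.sum_nonneg fun i hi => ?_
    have := Finset.mem_range.1 (hfsub k hi)
    exact sub_nonneg.2 (hm i this).le
  have hpowk : ∀ k : ℕ, (2:ℝ)⁻¹ ^ k = 2 * (2:ℝ)⁻¹ ^ (k + 1) := by
    intro k
    rw [pow_succ]
    ring
  have hLle : ∀ k, L k ≤ (2:ℝ)⁻¹ ^ (k + 1) + 2 * δ := by
    intro k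
    have hkpos : (0:ℝ) < (2:ℝ)⁻¹ ^ (k + 1) := by positivity
    have hb := sum_le_of_subset hm (s₁.filter (fun i => Kf (t i) = k)) (hfsub k)
      (x := 1 - (2:ℝ)⁻¹ ^ k - δ) (y := 1 - (2:ℝ)⁻¹ ^ (k + 1) + δ)
      (by rw [hpowk k]; linarith) ?_ ?_
    · rw [hL]
      calc ∑ i ∈ s₁.filter (fun i => Kf (t i) = k), (p (i + 1) - p i)
          ≤ (1 - (2:ℝ)⁻¹ ^ (k + 1) + δ) - (1 - (2:ℝ)⁻¹ ^ k - δ) := hb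
        _ = (2:ℝ)⁻¹ ^ (k + 1) + 2 * δ := by rw [hpowk k]; ring
    · intro i hi
      rw [Finset.mem_filter] at hi
      obtain ⟨hi1, hKf⟩ := hi
      rw [hs₁, Finset.mem_filter, Finset.mem_range] at hi1
      obtain ⟨hin, hit⟩ := hi1
      have h0 : 0 ≤ t i := ht0 i hin
      have h1 : t i < 1 := by linarith
      have hlow := Kf_lower h0 h1
      rw [hKf] at hlow
      have := htlb i hin
      linarith
    · intro i hi
      rw [Finset.mem_filter] at hi
      obtain ⟨hi1, hKf⟩ := hi
      rw [hs₁, Finset.mem_filter, Finset.mem_range] at hi1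
      obtain ⟨hin, hit⟩ := hi1
      have h0 : 0 ≤ t i := ht0 i hin
      have h1 : t i < 1 := by linarith
      have hspec := Kf_spec h1
      rw [hKf] at hspec
      have := htub i hin
      linarith
  -- lower bound for L k
  have hLge : ∀ k < N, (2:ℝ)⁻¹ ^ (k + 1) - 3 * δ ≤ L k := by
    intro k hkN
    by_cases hcase : (2:ℝ)⁻¹ ^ (k + 1) ≤ 3 * δ
    · have := hLnonneg k
      linarith
    · push_neg at hcase
      have hkpos : (0:ℝ) < (2:ℝ)⁻¹ ^ (k + 1) := by positivity
      have hk1 : (2:ℝ)⁻¹ ^ k ≤ 1 := pow_le_one₀ (by norm_num) (by norm_num)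
      have hcov := cover_lower hδ0 hm hf
        (x := 1 - (2:ℝ)⁻¹ ^ k) (y := 1 - (2:ℝ)⁻¹ ^ (k + 1) - δ)
        (by rw [hp0]; linarith) (by rw [hpowk k]; linarith) (by linarith)
      have hsub : (Finset.range n).filter
          (fun i => 1 - (2:ℝ)⁻¹ ^ k ≤ p i ∧ p (i + 1) ≤ 1 - (2:ℝ)⁻¹ ^ (k + 1) - δ)
          ⊆ s₁.filter (fun i => Kf (t i) = k) := by
        intro i hi
        rw [Finset.mem_filter, Finset.mem_range] at hi
        obtain ⟨hin, hxi, hyi⟩ := hi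
        have ht1 : 1 - (2:ℝ)⁻¹ ^ k ≤ t i := hxi.trans (ht i hin).1
        have ht2 : t i < 1 - (2:ℝ)⁻¹ ^ (k + 1) := by
          have := (ht i hin).2.trans hyi
          linarith
        have hKfk : Kf (t i) = k := Kf_unique ht1 ht2
        have hNk : (2:ℝ)⁻¹ ^ N ≤ (2:ℝ)⁻¹ ^ (k + 1) :=
          pow_le_pow_of_le_one (by norm_num) (by norm_num) (by omega)
        rw [Finset.mem_filter, hs₁, Finset.mem_filter, Finset.mem_range]
        exact ⟨⟨hin, by linarith⟩, hKfk⟩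
      have hmono2 : ∑ i ∈ (Finset.range n).filter
          (fun i => 1 - (2:ℝ)⁻¹ ^ k ≤ p i ∧ p (i + 1) ≤ 1 - (2:ℝ)⁻¹ ^ (k + 1) - δ),
          (p (i + 1) - p i) ≤ L k := by
        rw [hL]
        refine Finset.sum_le_sum_of_subset_of_nonneg hsub fun i hi _ => ?_
        have := Finset.mem_range.1 (hfsub k hi)
        exact sub_nonneg.2 (hm i this).le
      calc (2:ℝ)⁻¹ ^ (k + 1) - 3 * δ
          = (1 - (2:ℝ)⁻¹ ^ (k + 1) - δ) - (1 - (2:ℝ)⁻¹ ^ k) - 2 * δ := by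
            rw [hpowk k]; ring
        _ ≤ _ := hcov.trans hmono2
  -- tail bound
  have htail : ‖∑ i ∈ s₂, (p (i + 1) - p i) • sg d (t i)‖
      ≤ ((2:ℝ)⁻¹ ^ N + 2 * δ) * (2 * (2:ℝ)⁻¹ ^ N) := by
    have hs2sub : s₂ ⊆ Finset.range n := Finset.filter_subset _ _
    calc ‖∑ i ∈ s₂, (p (i + 1) - p i) • sg d (t i)‖
        ≤ ∑ i ∈ s₂, ‖(p (i + 1) - p i) • sg d (t i)‖ := norm_sum_le _ _
      _ ≤ ∑ i ∈ s₂, (p (i + 1) - p i) * (2 * (2:ℝ)⁻¹ ^ N) := by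
          refine Finset.sum_le_sum fun i hi => ?_
          have hin := Finset.mem_range.1 (hs2sub hi)
          rw [hs₂, Finset.mem_filter] at hi
          have hti : 1 - (2:ℝ)⁻¹ ^ N ≤ t i := by
            have := hi.2
            push_neg at this
            exact this
          rw [norm_smul, Real.norm_eq_abs, abs_of_nonneg (sub_nonneg.2 (hm i hin).le)]
          exact mul_le_mul_of_nonneg_left (sg_norm d hd N hti)
            (sub_nonneg.2 (hm i hin).le)
      _ = (∑ i ∈ s₂, (p (i + 1) - p i)) * (2 * (2:ℝ)⁻¹ ^ N) := by
          rw [Finset.sum_mul]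
      _ ≤ ((2:ℝ)⁻¹ ^ N + 2 * δ) * (2 * (2:ℝ)⁻¹ ^ N) := by
          refine mul_le_mul_of_nonneg_right ?_ (by positivity)
          have hb := sum_le_of_subset hm s₂ hs2sub
            (x := 1 - (2:ℝ)⁻¹ ^ N - δ) (y := 1 + δ) (by linarith) ?_ ?_
          · calc ∑ i ∈ s₂, (p (i + 1) - p i)
                ≤ (1 + δ) - (1 - (2:ℝ)⁻¹ ^ N - δ) := hb
              _ = (2:ℝ)⁻¹ ^ N + 2 * δ := by ring
          · intro i hi
            have hin := Finset.mem_range.1 (hs2sub hi)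
            rw [hs₂, Finset.mem_filter] at hi
            have hti : 1 - (2:ℝ)⁻¹ ^ N ≤ t i := by
              have := hi.2
              push_neg at this
              exact this
            have := htlb i hin
            linarith
          · intro i hi
            have hin := Finset.mem_range.1 (hs2sub hi)
            have := hmono (i + 1) n hin le_rfl
            linarith
  -- assembling
  have hDsum : ∑ k ∈ Finset.range N, d k = ∑ k ∈ Finset.range N, ((2:ℝ)⁻¹ ^ (k + 1)) • c k := by
    refine Finset.sum_congr rfl fun k _ => ?_
    rw [hc]
    simp only
    rw [smul_smul, ← mul_pow]
    norm_num
  have hmain : ‖∑ k ∈ Finset.range N, (L k - (2:ℝ)⁻¹ ^ (k + 1)) • c k‖ ≤ 12 * δ := by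
    calc ‖∑ k ∈ Finset.range N, (L k - (2:ℝ)⁻¹ ^ (k + 1)) • c k‖
        ≤ ∑ k ∈ Finset.range N, ‖(L k - (2:ℝ)⁻¹ ^ (k + 1)) • c k‖ := norm_sum_le _ _
      _ ≤ ∑ k ∈ Finset.range N, (3 * δ) * (2 * (2:ℝ)⁻¹ ^ k) := by
          refine Finset.sum_le_sum fun k hk => ?_
          rw [Finset.mem_range] at hk
          rw [norm_smul, Real.norm_eq_abs]
          have habs : |L k - (2:ℝ)⁻¹ ^ (k + 1)| ≤ 3 * δ := by
            rw [abs_le]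
            constructor
            · have := hLge k hk
              linarith
            · have := hLle k
              linarith
          refine mul_le_mul habs (hck k) (norm_nonneg _) (by positivity)
      _ ≤ 12 * δ := by
          have heq : ∑ k ∈ Finset.range N, (3 * δ) * (2 * (2:ℝ)⁻¹ ^ k)
              = (6 * δ) * ∑ k ∈ Finset.range N, (2:ℝ)⁻¹ ^ k := by
            rw [Finset.mul_sum]
            exact Finset.sum_congr rfl fun k _ => by ring
          rw [heq]
          have hg := geom_half_le_two N
          have hgnn : (0:ℝ) ≤ ∑ k ∈ Finset.range N, (2:ℝ)⁻¹ ^ k :=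
            Finset.sum_nonneg fun k _ => by positivity
          nlinarith
  have h4N : (2:ℝ)⁻¹ ^ N * (2:ℝ)⁻¹ ^ N = (4:ℝ)⁻¹ ^ N := by
    rw [← mul_pow]
    norm_num
  calc ‖(∑ i ∈ Finset.range n, (p (i + 1) - p i) • sg d (t i)) - ∑ k ∈ Finset.range N, d k‖
      = ‖(∑ k ∈ Finset.range N, (L k - (2:ℝ)⁻¹ ^ (k + 1)) • c k)
          + ∑ i ∈ s₂, (p (i + 1) - p i) • sg d (t i)‖ := by
        rw [hsplit, hfiber, hDsum]
        have hsd : ∑ k ∈ Finset.range N, (L k - (2:ℝ)⁻¹ ^ (k + 1)) • c k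
            = ∑ k ∈ Finset.range N, L k • c k
              - ∑ k ∈ Finset.range N, ((2:ℝ)⁻¹ ^ (k + 1)) • c k := by
          rw [← Finset.sum_sub_distrib]
          exact Finset.sum_congr rfl fun k _ => sub_smul _ _ _
        rw [hsd]
        congr 1
        abel
    _ ≤ ‖∑ k ∈ Finset.range N, (L k - (2:ℝ)⁻¹ ^ (k + 1)) • c k‖
          + ‖∑ i ∈ s₂, (p (i + 1) - p i) • sg d (t i)‖ := norm_add_le _ _
    _ ≤ 12 * δ + ((2:ℝ)⁻¹ ^ N + 2 * δ) * (2 * (2:ℝ)⁻¹ ^ N) := add_le_add hmain htail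
    _ ≤ 16 * δ + 2 * (4:ℝ)⁻¹ ^ N := by nlinarith [hNpow, hN1, h4N, hδ0]

/-- The symmetrized step function has Riemann integral `0` on `[0,2]`. -/
lemma hri_F (d : ℕ → E) (hd : ∀ k, ‖d k‖ ≤ (4:ℝ)⁻¹ ^ k) :
    HasRiemannIntegral (fun x => if x < 1 then sg d x else - sg d (2 - x)) 0 2 0 := by
  classical
  set F : ℝ → E := fun x => if x < 1 then sg d x else - sg d (2 - x) with hF
  rw [hri_iff]
  intro ε hε
  obtain ⟨N, hN⟩ : ∃ N : ℕ, 4 * (4:ℝ)⁻¹ ^ N < ε / 2 := by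
    obtain ⟨N, hN⟩ := exists_pow_lt_of_lt_one (show (0:ℝ) < ε / 8 by linarith)
      (by norm_num : (4:ℝ)⁻¹ < 1)
    exact ⟨N, by linarith⟩
  set δ := min (ε / 65) (1 / 2) with hδdef
  have hδ0 : 0 < δ := lt_min (by linarith) (by norm_num)
  have hδhalf : δ ≤ 1 / 2 := min_le_right _ _
  have hδε : 32 * δ < ε / 2 := by
    have := min_le_left (ε / 65) (1 / 2)
    have : δ ≤ ε / 65 := this
    linarith
  refine ⟨δ, hδ0, ?_⟩
  rintro n p t ⟨hp0, hpn, hm, hf, ht⟩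
  have hmono := pmono hm
  have hn0 : 0 < n := by
    rcases Nat.eq_zero_or_pos n with rfl | h
    · rw [hp0] at hpn; norm_num at hpn
    · exact h
  have htagmono : ∀ i j, i ≤ j → j < n → t i ≤ t j := by
    intro i j hij hj
    rcases Nat.eq_or_lt_of_le hij with rfl | hlt
    · exact le_refl _
    · exact ((ht i (by omega)).2.trans (hmono (i + 1) j hlt hj.le)).trans (ht j hj).1
  have hex : ∃ i, i < n ∧ 1 ≤ t i := by
    refine ⟨n - 1, by omega, ?_⟩
    have h1 : p (n - 1 + 1) - p (n - 1) < δ := hf (n - 1) (by omega)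
    rw [show n - 1 + 1 = n by omega, hpn] at h1
    have h2 := (ht (n - 1) (by omega)).1
    linarith
  set m := Nat.find hex with hmdef
  obtain ⟨hmn, htm⟩ := Nat.find_spec hex
  have htlt : ∀ i < m, t i < 1 := by
    intro i hi
    have hnot := Nat.find_min hex hi
    push_neg at hnot
    exact hnot (by omega)
  have htge : ∀ i, m ≤ i → i < n → 1 ≤ t i := fun i hmi hin =>
    le_trans htm (htagmono m i hmi hin)
  have hpm1 : 1 - δ ≤ p m := by
    have h1 := (ht m hmn).2
    have h2 := hf m hmn
    linarith
  have hpm2 : p m ≤ 1 + δ := by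
    rcases Nat.eq_zero_or_pos m with h | h
    · rw [h, hp0]; linarith
    · have h1 := htlt (m - 1) (by omega)
      have h2 := (ht (m - 1) (by omega)).1
      have h3 : p (m - 1 + 1) - p (m - 1) < δ := hf (m - 1) (by omega)
      rw [show m - 1 + 1 = m by omega] at h3
      linarith
  have hcore1 := core d hd N hδ0 (n := m) (p := p) (t := t) hp0 hpm1 hpm2
    (fun i hi => hm i (by omega)) (fun i hi => hf i (by omega)) (fun i hi => ht i (by omega))
  -- the reflected partition of the right half
  set n' := n - m with hn'def
  set q : ℕ → ℝ := fun j => 2 - p (n - j) with hqdef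
  set sfun : ℕ → ℝ := fun j => 2 - t (n - 1 - j) with hsdef
  have hq0 : q 0 = 0 := by
    rw [hqdef]
    simp only [Nat.sub_zero]
    rw [hpn]
    ring
  have hqn'1 : 1 - δ ≤ q n' := by
    rw [hqdef]
    simp only
    rw [show n - n' = m by omega]
    linarith
  have hqn'2 : q n' ≤ 1 + δ := by
    rw [hqdef]
    simp only
    rw [show n - n' = m by omega]
    linarith
  have hqm : ∀ j < n', q j < q (j + 1) := by
    intro j hj
    show 2 - p (n - j) < 2 - p (n - (j + 1))
    have h := hm (n - j - 1) (by omega)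
    rw [show n - j - 1 + 1 = n - j by omega] at h
    rw [show n - (j + 1) = n - j - 1 by omega]
    linarith
  have hqf : ∀ j < n', q (j + 1) - q j < δ := by
    intro j hj
    show 2 - p (n - (j + 1)) - (2 - p (n - j)) < δ
    have h := hf (n - j - 1) (by omega)
    rw [show n - j - 1 + 1 = n - j by omega] at h
    rw [show n - (j + 1) = n - j - 1 by omega]
    linarith
  have hqt : ∀ j < n', sfun j ∈ Set.Icc (q j) (q (j + 1)) := by
    intro j hj
    have hi : n - 1 - j < n := by omega
    obtain ⟨h1, h2⟩ := ht (n - 1 - j) hi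
    rw [show n - 1 - j + 1 = n - j by omega] at h2
    constructor
    · show 2 - p (n - j) ≤ 2 - t (n - 1 - j)
      linarith
    · show 2 - t (n - 1 - j) ≤ 2 - p (n - (j + 1))
      rw [show n - (j + 1) = n - 1 - j by omega]
      linarith
  have hcore2 := core d hd N hδ0 (n := n') (p := q) (t := sfun) hq0 hqn'1 hqn'2 hqm hqf hqt
  have hreindex : ∑ j ∈ Finset.range n', (q (j + 1) - q j) • sg d (sfun j)
      = ∑ i ∈ Finset.Ico m n, (p (i + 1) - p i) • sg d (2 - t i) := by
    rw [← Finset.sum_range_reflect]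
    rw [Finset.sum_Ico_eq_sum_range]
    rw [show n - m = n' by omega]
    refine Finset.sum_congr rfl fun j hj => ?_
    rw [Finset.mem_range] at hj
    rw [hqdef, hsdef]
    simp only
    rw [show n' - 1 - j + 1 = n' - j by omega]
    rw [show n - (n' - j) = m + j by omega]
    rw [show n - (n' - 1 - j) = m + j + 1 by omega]
    rw [show n - 1 - (n' - 1 - j) = m + j by omega]
    congr 1
    ring
  have hsplit : ∑ i ∈ Finset.range n, (p (i + 1) - p i) • F (t i)
      = (∑ i ∈ Finset.range m, (p (i + 1) - p i) • sg d (t i))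
        - ∑ j ∈ Finset.range n', (q (j + 1) - q j) • sg d (sfun j) := by
    rw [hreindex]
    rw [Finset.range_eq_Ico, ← Finset.sum_Ico_consecutive _ (Nat.zero_le m) hmn.le]
    rw [← Finset.range_eq_Ico, sub_eq_add_neg]
    congr 1
    · refine Finset.sum_congr rfl fun i hi => ?_
      rw [Finset.mem_range] at hi
      rw [hF]
      simp only
      rw [if_pos (htlt i hi)]
    · rw [← Finset.sum_neg_distrib]
      refine Finset.sum_congr rfl fun i hi => ?_
      rw [Finset.mem_Ico] at hi
      rw [hF]
      simp only
      rw [if_neg (not_lt.2 (htge i hi.1 hi.2)), smul_neg]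
  show ‖(∑ i ∈ Finset.range n, (p (i + 1) - p i) • F (t i)) - 0‖ < ε
  rw [sub_zero, hsplit]
  calc ‖(∑ i ∈ Finset.range m, (p (i + 1) - p i) • sg d (t i))
        - ∑ j ∈ Finset.range n', (q (j + 1) - q j) • sg d (sfun j)‖
      = ‖((∑ i ∈ Finset.range m, (p (i + 1) - p i) • sg d (t i)) - ∑ k ∈ Finset.range N, d k)
          - ((∑ j ∈ Finset.range n', (q (j + 1) - q j) • sg d (sfun j))
            - ∑ k ∈ Finset.range N, d k)‖ := by
        congr 1
        abel
    _ ≤ ‖(∑ i ∈ Finset.range m, (p (i + 1) - p i) • sg d (t i)) - ∑ k ∈ Finset.range N, d k‖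
          + ‖(∑ j ∈ Finset.range n', (q (j + 1) - q j) • sg d (sfun j))
            - ∑ k ∈ Finset.range N, d k‖ := norm_sub_le _ _
    _ ≤ (16 * δ + 2 * (4:ℝ)⁻¹ ^ N) + (16 * δ + 2 * (4:ℝ)⁻¹ ^ N) := add_le_add hcore1 hcore2
    _ = 32 * δ + 4 * (4:ℝ)⁻¹ ^ N := by ring
    _ < ε / 2 + ε / 2 := add_lt_add hδε hN
    _ = ε := add_halves ε

/-- The Chasles property implies completeness. -/
lemma complete_of_chasles (hCh : ChaslesProperty E) : CompleteSpace E := by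
  apply Metric.complete_of_cauchySeq_tendsto
  intro u hu
  have hV : ∀ k : ℕ, {x : E × E | dist x.1 x.2 < (4:ℝ)⁻¹ ^ k} ∈ uniformity E := fun k =>
    Metric.dist_mem_uniformity (by positivity)
  obtain ⟨φ, hφ, hdist⟩ := hu.subseq_mem hV
  set v : ℕ → E := u ∘ φ with hv
  set d : ℕ → E := fun k => v (k + 1) - v k with hdd
  have hd : ∀ k, ‖d k‖ ≤ (4:ℝ)⁻¹ ^ k := by
    intro k
    have h := hdist k
    rw [Set.mem_setOf_eq, dist_eq_norm] at h
    exact h.le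
  have hF := hri_F d hd
  obtain ⟨y₁, y₂, hy₁, -, -⟩ := hCh 0 2 1 _ 0 (by norm_num) (by norm_num) hF
  rw [hri_iff] at hy₁
  have hkey : ∀ ε > 0, ∀ N : ℕ,
      ‖(∑ k ∈ Finset.range N, d k) - y₁‖ ≤ 17 * ε + 2 * (4:ℝ)⁻¹ ^ N := by
    intro ε hε N
    obtain ⟨δ₀, hδ₀, H⟩ := hy₁ ε hε
    set δ := min δ₀ ε with hδdef
    have hδ0 : 0 < δ := lt_min hδ₀ hε
    have hδε : δ ≤ ε := min_le_right _ _
    obtain ⟨np, pp, tp, hP⟩ := exists_isPart 0 1 δ (by norm_num) hδ0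
    have hRS := H np pp tp (isPart_mono (min_le_left _ _) hP)
    obtain ⟨hp0, hpn, hm, hfi, htg⟩ := hP
    have hmono := pmono hm
    have hFsg : RS (fun x => if x < 1 then sg d x else - sg d (2 - x)) np pp tp
        = RS (sg d) np pp tp := by
      refine Finset.sum_congr rfl fun i hi => ?_
      rw [Finset.mem_range] at hi
      congr 1
      show (if tp i < 1 then sg d (tp i) else -sg d (2 - tp i)) = sg d (tp i)
      by_cases hcase : tp i < 1
      · rw [if_pos hcase]
      · have h1 : tp i ≤ 1 := (htg i hi).2.trans (by rw [← hpn]; exact hmono (i + 1) np hi le_rfl)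
        have h2 : tp i = 1 := le_antisymm h1 (not_lt.1 hcase)
        rw [if_neg hcase, h2]
        show -sg d (2 - 1) = sg d 1
        norm_num [sg]
    rw [hFsg] at hRS
    have hcore' : ‖RS (sg d) np pp tp - ∑ k ∈ Finset.range N, d k‖
        ≤ 16 * δ + 2 * (4:ℝ)⁻¹ ^ N :=
      core d hd N hδ0 hp0 (by rw [hpn]; linarith) (by rw [hpn]; linarith) hm hfi htg
    calc ‖(∑ k ∈ Finset.range N, d k) - y₁‖
        = ‖(RS (sg d) np pp tp - y₁) - (RS (sg d) np pp tp - ∑ k ∈ Finset.range N, d k)‖ := by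
          congr 1
          abel
      _ ≤ ‖RS (sg d) np pp tp - y₁‖ + ‖RS (sg d) np pp tp - ∑ k ∈ Finset.range N, d k‖ :=
          norm_sub_le _ _
      _ ≤ ε + (16 * δ + 2 * (4:ℝ)⁻¹ ^ N) := add_le_add hRS.le hcore'
      _ ≤ 17 * ε + 2 * (4:ℝ)⁻¹ ^ N := by linarith
  have hvlim : Tendsto v atTop (nhds (v 0 + y₁)) := by
    rw [Metric.tendsto_atTop]
    intro ε hε
    obtain ⟨N₀, hN₀⟩ : ∃ N₀ : ℕ, 2 * (4:ℝ)⁻¹ ^ N₀ < ε / 2 := by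
      obtain ⟨N₀, h⟩ := exists_pow_lt_of_lt_one (show (0:ℝ) < ε / 4 by linarith)
        (by norm_num : (4:ℝ)⁻¹ < 1)
      exact ⟨N₀, by linarith⟩
    refine ⟨N₀, fun M hM => ?_⟩
    have hsum : ∑ k ∈ Finset.range M, d k = v M - v 0 := Finset.sum_range_sub v M
    have h1 := hkey (ε / 100) (by linarith) M
    rw [hsum] at h1
    rw [dist_eq_norm, show v M - (v 0 + y₁) = v M - v 0 - y₁ by abel]
    have hmon : (4:ℝ)⁻¹ ^ M ≤ (4:ℝ)⁻¹ ^ N₀ :=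
      pow_le_pow_of_le_one (by norm_num) (by norm_num) hM
    calc ‖v M - v 0 - y₁‖ ≤ 17 * (ε / 100) + 2 * (4:ℝ)⁻¹ ^ M := h1
      _ ≤ 17 * (ε / 100) + 2 * (4:ℝ)⁻¹ ^ N₀ := by linarith
      _ < ε := by linarith
  exact ⟨v 0 + y₁, tendsto_nhds_of_cauchySeq_of_subseq hu hφ.tendsto_atTop hvlim⟩

end ChaslesAux

/-- The Chasles property holds for `E`-valued integrals iff `E` is complete. -/
theorem chaslesProperty_iff_completeSpace (E : Type*) [NormedAddCommGroup E]
    [NormedSpace ℝ E] :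
    ChaslesProperty E ↔ CompleteSpace E := by
  constructor
  · exact ChaslesAux.complete_of_chasles
  · intro h
    exact ChaslesAux.chasles_of_complete
end
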